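/- arXiv:2409.12571 — 6 statements merged into one kernel-verified Lean document; each statement's English description precedes it below -/
import Mathlib

section
/- Let p > 1 and let u : [0,∞) → ℝ be continuously differentiable with compact support and u(0) = 0. Then ∫₀^∞ |u'(x)|^p dx ≥ ((p-1)/p)^p ∫₀^∞ |u(x)|^p / x^p dx. -/
open MeasureTheory Real Set

-- |t|^(p-2) * |t| = |t|^(p-1)
lemma hardy_aux_abs_rpow {p : ℝ} (hp : 1 < p) (t : ℝ) :
    |t| ^ (p - 2) * |t| = |t| ^ (p - 1) := by
  rcases eq_or_ne t 0 with rfl | ht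
  · simp [Real.zero_rpow (by linarith : p - 1 ≠ 0)]
  · rw [← Real.rpow_add_one (abs_ne_zero.2 ht) (p - 2), show p - 2 + 1 = p - 1 by ring]

-- integrability helper
lemma hardy_aux_integrable {f : ℝ → ℝ} {R C : ℝ} (hR : 0 < R)
    (hf : ContinuousOn f (Set.Ioi 0))
    (hb : ∀ x ∈ Set.Ioc (0:ℝ) R, |f x| ≤ C)
    (h0 : ∀ x, R < x → f x = 0) :
    MeasureTheory.IntegrableOn f (Set.Ioi 0) := by
  have hsplit : Set.Ioc (0:ℝ) R ∪ Set.Ioi R = Set.Ioi 0 := Set.Ioc_union_Ioi_eq_Ioi hR.le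
  rw [← hsplit]
  apply MeasureTheory.IntegrableOn.union
  · refine MeasureTheory.Integrable.mono' (g := fun _ => C)
      (integrableOn_const measure_Ioc_lt_top.ne) ?_ ?_
    · exact (hf.mono (Set.Ioc_subset_Ioi_self)).aestronglyMeasurable measurableSet_Ioc
    · filter_upwards [MeasureTheory.ae_restrict_mem measurableSet_Ioc] with x hx
      simpa using hb x hx
  · refine (MeasureTheory.integrableOn_zero (ε' := ℝ)).congr_fun ?_ measurableSet_Ioi
    intro x hx
    exact (h0 x hx).symm

-- continuity of t ↦ |t|^(p-2) * t
lemma hardy_aux_w_cont {p : ℝ} (hp : 1 < p) :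
    Continuous (fun t : ℝ => |t| ^ (p - 2) * t) := by
  rw [continuous_iff_continuousAt]
  intro t
  rcases eq_or_ne t 0 with rfl | ht
  · have h0 : |(0:ℝ)| ^ (p - 2) * (0:ℝ) = 0 := by simp
    rw [ContinuousAt, h0]
    have hb : ∀ x : ℝ, ‖|x| ^ (p - 2) * x‖ ≤ |x| ^ (p - 1) := by
      intro x
      rw [Real.norm_eq_abs, abs_mul, abs_of_nonneg (Real.rpow_nonneg (abs_nonneg _) _),
        hardy_aux_abs_rpow hp]
    have htend : Filter.Tendsto (fun t : ℝ => |t| ^ (p - 1)) (nhds 0) (nhds 0) := by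
      have hcont : Continuous fun t : ℝ => |t| ^ (p - 1) :=
        continuous_abs.rpow_const (fun x => Or.inr (by linarith))
      have := hcont.tendsto 0
      simpa [Real.zero_rpow (by linarith : p - 1 ≠ 0)] using this
    exact squeeze_zero_norm hb htend
  · have h1 : ContinuousAt (fun s : ℝ => s ^ (p - 2)) |t| :=
      Real.continuousAt_rpow_const _ _ (Or.inl (abs_ne_zero.2 ht))
    exact ((h1.comp continuous_abs.continuousAt).mul continuousAt_id)

theorem hardy_halfline (p : ℝ) (hp : 1 < p) (u : ℝ → ℝ)
    (hu : ContDiff ℝ 1 u) (hc : HasCompactSupport u) (hu0 : u 0 = 0) :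
    ∫ x in Set.Ioi (0 : ℝ), |deriv u x| ^ p ≥
      ((p - 1) / p) ^ p * ∫ x in Set.Ioi (0 : ℝ), |u x| ^ p / x ^ p := by
  have hp0 : (0:ℝ) < p := by linarith
  have hp1 : (0:ℝ) < p - 1 := by linarith
  set q : ℝ := p / (p - 1) with hq
  have hpq : q.HolderConjugate p := by
    exact ((Real.holderConjugate_iff_eq_conjExponent hp).2 hq).symm
  have hup : Differentiable ℝ u := hu.differentiable one_ne_zero
  have hcu : Continuous u := hu.continuous
  have hu' : Continuous (deriv u) := hu.continuous_deriv le_rfl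
  -- bound on deriv
  obtain ⟨M, hM0, hMb⟩ : ∃ M, 0 < M ∧ ∀ x, |deriv u x| ≤ M := by
    obtain ⟨C, hC⟩ := (hc.deriv).isCompact.exists_bound_of_continuousOn hu'.continuousOn
    refine ⟨max C 0 + 1, by positivity, fun x => ?_⟩
    by_cases hx : x ∈ tsupport (deriv u)
    · have := hC x hx
      rw [Real.norm_eq_abs] at this
      have h2 : C ≤ max C 0 := le_max_left _ _
      linarith
    · simp only [image_eq_zero_of_notMem_tsupport hx, abs_zero]
      positivity
  -- linear bound on u
  have hlin : ∀ x : ℝ, 0 ≤ x → |u x| ≤ M * x := by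
    intro x hx
    have := Convex.norm_image_sub_le_of_norm_deriv_le (s := Set.univ)
      (fun y _ => hup y) (fun y _ => by simpa using hMb y) convex_univ
      (Set.mem_univ 0) (Set.mem_univ x)
    simpa [hu0, abs_of_nonneg hx] using this
  -- support radius
  obtain ⟨R, hR0, hRu⟩ : ∃ R, 0 < R ∧ ∀ x, R < x → u x = 0 := by
    obtain ⟨R, hR⟩ := hc.isCompact.isBounded.subset_closedBall 0
    refine ⟨max R 1, lt_of_lt_of_le one_pos (le_max_right _ _), fun x hx => ?_⟩
    apply image_eq_zero_of_notMem_tsupport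
    intro hmem
    have := hR hmem
    simp only [Metric.mem_closedBall, dist_zero_right, Real.norm_eq_abs] at this
    have : x ≤ R := le_trans (le_abs_self x) this
    have : x ≤ max R 1 := le_trans this (le_max_left _ _)
    linarith
  -- abbreviations
  set v : ℝ → ℝ := deriv u with hv
  set A : ℝ := ∫ x in Set.Ioi (0:ℝ), |u x| ^ p / x ^ p with hA
  set B : ℝ := ∫ x in Set.Ioi (0:ℝ), |v x| ^ p with hB
  have hB0 : 0 ≤ B := by
    apply MeasureTheory.setIntegral_nonneg measurableSet_Ioi
    intro x _; positivity
  have hA0 : 0 ≤ A := by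
    apply MeasureTheory.setIntegral_nonneg measurableSet_Ioi
    intro x hx
    exact div_nonneg (Real.rpow_nonneg (abs_nonneg _) _) (Real.rpow_nonneg (le_of_lt hx) _)
  -- continuity facts
  have hcont_up : ∀ r : ℝ, 0 < r → Continuous fun x => |u x| ^ r := by
    intro r hr
    exact hcu.abs.rpow_const (fun x => Or.inr hr.le)
  have hcont_pow : ∀ c : ℝ, ContinuousOn (fun x : ℝ => x ^ c) (Set.Ioi 0) := by
    intro c x hx
    exact (Real.continuousAt_rpow_const x c (Or.inl (ne_of_gt hx))).continuousWithinAt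
  -- pointwise bound |u x|^r ≤ M^r * x^r on x > 0
  have hur : ∀ r : ℝ, 0 < r → ∀ x : ℝ, 0 < x → |u x| ^ r ≤ M ^ r * x ^ r := by
    intro r hr x hx
    rw [← Real.mul_rpow hM0.le hx.le]
    exact Real.rpow_le_rpow (abs_nonneg _) (hlin x hx.le) hr.le
  -- the auxiliary functions
  set w : ℝ → ℝ := fun t => |t| ^ (p - 2) * t with hwdef
  have hwc : Continuous w := hardy_aux_w_cont hp
  have hwabs : ∀ t : ℝ, |w t| = |t| ^ (p - 1) := by
    intro t
    rw [hwdef, abs_mul, abs_of_nonneg (Real.rpow_nonneg (abs_nonneg _) _),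
      hardy_aux_abs_rpow hp]
  set F : ℝ → ℝ := fun x => |u x| ^ (p - 1) * x ^ (1 - p) with hFdef
  set T1 : ℝ → ℝ := fun x => p * w (u x) * v x * x ^ (1 - p) with hT1def
  set T2 : ℝ → ℝ := fun x => |u x| ^ p * ((1 - p) * x ^ (1 - p - 1)) with hT2def
  set G : ℝ → ℝ := fun x => |u x| ^ p * x ^ (1 - p) with hGdef
  have hG00 : G 0 = 0 := by
    simp [hGdef, hu0, Real.zero_rpow (ne_of_gt hp0)]
  -- x^(p-1) * x^(1-p) = 1 for x > 0
  have hxx : ∀ x : ℝ, 0 < x → x ^ (p - 1) * x ^ (1 - p) = 1 := by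
    intro x hx
    rw [← Real.rpow_add hx]
    norm_num
  have hxx' : ∀ x : ℝ, 0 < x → x ^ p * x ^ (1 - p - 1) = 1 := by
    intro x hx
    rw [← Real.rpow_add hx]
    norm_num
  -- |F x| ≤ M^(p-1) for x > 0, and F x = |F x|
  have hF0 : ∀ x : ℝ, 0 < x → 0 ≤ F x := by
    intro x hx
    exact mul_nonneg (Real.rpow_nonneg (abs_nonneg _) _) (Real.rpow_nonneg hx.le _)
  have hFb : ∀ x : ℝ, 0 < x → F x ≤ M ^ (p - 1) := by
    intro x hx
    calc F x ≤ (M ^ (p - 1) * x ^ (p - 1)) * x ^ (1 - p) := by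
          apply mul_le_mul_of_nonneg_right (hur (p-1) hp1 x hx) (Real.rpow_nonneg hx.le _)
      _ = M ^ (p - 1) := by rw [mul_assoc, hxx x hx, mul_one]
  have hFR : ∀ x : ℝ, R < x → F x = 0 := by
    intro x hx
    simp [hFdef, hRu x hx, Real.zero_rpow (ne_of_gt hp1)]
  have hcontF : ContinuousOn F (Set.Ioi 0) :=
    (hcont_up (p-1) hp1).continuousOn.mul (hcont_pow (1-p))
  -- |T1 x| ≤ p * M^p for 0 < x
  have hT1abs : ∀ x : ℝ, 0 < x → |T1 x| = p * (F x * |v x|) := by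
    intro x hx
    rw [hT1def]
    simp only
    rw [abs_mul, abs_mul, abs_mul, abs_of_nonneg hp0.le, hwabs,
      abs_of_nonneg (Real.rpow_nonneg hx.le _), hFdef]
    ring
  have hT1b : ∀ x : ℝ, 0 < x → |T1 x| ≤ p * M ^ p := by
    intro x hx
    rw [hT1abs x hx]
    have h1 : F x * |v x| ≤ M ^ (p - 1) * M := by
      apply mul_le_mul (hFb x hx) (hMb x) (abs_nonneg _) (Real.rpow_nonneg hM0.le _)
    have h2 : M ^ (p - 1) * M = M ^ p := by
      rw [← Real.rpow_add_one (ne_of_gt hM0)]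
      norm_num
    rw [h2] at h1
    exact mul_le_mul_of_nonneg_left h1 hp0.le
  have hT1R : ∀ x : ℝ, R < x → T1 x = 0 := by
    intro x hx
    have hvx : v x = 0 := by
      have hev : u =ᶠ[nhds x] (fun _ => (0:ℝ)) := by
        filter_upwards [isOpen_Ioi.mem_nhds hx] with y hy using hRu y hy
      rw [hv, hev.deriv_eq]
      simp
    simp [hT1def, hvx]
  have hcontT1 : ContinuousOn T1 (Set.Ioi 0) :=
    (((continuous_const.mul (hwc.comp hcu)).mul hu').continuousOn).mul (hcont_pow (1-p))
  have hintT1 : MeasureTheory.IntegrableOn T1 (Set.Ioi 0) :=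
    hardy_aux_integrable hR0 hcontT1 (fun x hx => hT1b x hx.1) hT1R
  -- T2
  have hT2b : ∀ x : ℝ, 0 < x → |T2 x| ≤ (p - 1) * M ^ p := by
    intro x hx
    rw [hT2def]
    simp only
    rw [abs_mul, abs_mul, abs_of_nonneg (Real.rpow_nonneg (abs_nonneg _) _),
      abs_of_nonneg (Real.rpow_nonneg hx.le _), abs_of_nonpos (by linarith : 1 - p ≤ 0)]
    have h1 : |u x| ^ p * x ^ (1 - p - 1) ≤ (M ^ p * x ^ p) * x ^ (1 - p - 1) := by
      apply mul_le_mul_of_nonneg_right (hur p hp0 x hx) (Real.rpow_nonneg hx.le _)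
    have h2 : (M ^ p * x ^ p) * x ^ (1 - p - 1) = M ^ p := by
      rw [mul_assoc, hxx' x hx, mul_one]
    calc |u x| ^ p * (-(1 - p) * x ^ (1 - p - 1))
        = (p - 1) * (|u x| ^ p * x ^ (1 - p - 1)) := by ring
      _ ≤ (p - 1) * M ^ p := by
          apply mul_le_mul_of_nonneg_left _ hp1.le
          rw [← h2]; exact h1
  have hT2R : ∀ x : ℝ, R < x → T2 x = 0 := by
    intro x hx
    simp [hT2def, hRu x hx, Real.zero_rpow (ne_of_gt hp0)]
  have hcontT2 : ContinuousOn T2 (Set.Ioi 0) :=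
    ((hcont_up p hp0).continuousOn).mul (continuousOn_const.mul (hcont_pow (1-p-1)))
  have hintT2 : MeasureTheory.IntegrableOn T2 (Set.Ioi 0) :=
    hardy_aux_integrable hR0 hcontT2 (fun x hx => hT2b x hx.1) hT2R
  -- derivative of G
  have hGderiv : ∀ x ∈ Set.Ioi (0:ℝ), HasDerivAt G (T1 x + T2 x) x := by
    intro x hx
    have h1 : HasDerivAt (fun y => |u y| ^ p) (p * w (u x) * v x) x := by
      have := (hasDerivAt_abs_rpow (u x) hp).comp x ((hup x).hasDerivAt)
      refine this.congr_deriv ?_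
      rw [hwdef, hv]
      simp only [Function.comp]
      ring
    have h2 : HasDerivAt (fun y : ℝ => y ^ (1 - p)) ((1 - p) * x ^ (1 - p - 1)) x :=
      Real.hasDerivAt_rpow_const (Or.inl (ne_of_gt hx))
    have := h1.mul h2
    exact this
  -- continuity of G at 0 from the right
  have hGcont : ContinuousWithinAt G (Set.Ici 0) 0 := by
    rw [ContinuousWithinAt, hG00]
    apply squeeze_zero' (g := fun x => M ^ p * x)
    · filter_upwards [self_mem_nhdsWithin] with t (ht : t ∈ Set.Ici (0:ℝ))
      exact mul_nonneg (Real.rpow_nonneg (abs_nonneg _) _) (Real.rpow_nonneg ht _)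
    · filter_upwards [self_mem_nhdsWithin] with t (ht : t ∈ Set.Ici (0:ℝ))
      rcases eq_or_lt_of_le (show (0:ℝ) ≤ t from ht) with rfl | ht'
      · rw [hG00]; simp
      · calc G t ≤ (M ^ p * t ^ p) * t ^ (1 - p) := by
              exact mul_le_mul_of_nonneg_right (hur p hp0 t ht') (Real.rpow_nonneg ht _)
          _ = M ^ p * (t ^ p * t ^ (1 - p)) := by ring
          _ = M ^ p * t := by
              rw [← Real.rpow_add ht']
              norm_num
    · have : Filter.Tendsto (fun x : ℝ => M ^ p * x) (nhds 0) (nhds (M ^ p * 0)) :=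
        (continuous_const.mul continuous_id).tendsto 0
      simpa using this.mono_left nhdsWithin_le_nhds
  -- G tends to 0 at infinity
  have hGtop : Filter.Tendsto G Filter.atTop (nhds 0) := by
    apply Filter.Tendsto.congr' _ (tendsto_const_nhds (x := (0:ℝ)))
    filter_upwards [Filter.eventually_gt_atTop R] with x hx
    simp [hGdef, hRu x hx, Real.zero_rpow (ne_of_gt hp0)]
  -- FTC
  have hFTC : ∫ x in Set.Ioi (0:ℝ), (T1 x + T2 x) = 0 := by
    rw [MeasureTheory.integral_Ioi_of_hasDerivAt_of_tendsto hGcont hGderiv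
      (hintT1.add hintT2) hGtop, hG00, sub_zero]
  have hsum : (∫ x in Set.Ioi (0:ℝ), T1 x) + ∫ x in Set.Ioi (0:ℝ), T2 x = 0 := by
    rw [← MeasureTheory.integral_add hintT1 hintT2]
    exact hFTC
  have hterm2 : ∫ x in Set.Ioi (0:ℝ), T2 x = (1 - p) * A := by
    rw [hA, ← MeasureTheory.integral_const_mul]
    apply MeasureTheory.setIntegral_congr_fun measurableSet_Ioi
    intro x hx
    have hx' : (0:ℝ) < x := hx
    rw [hT2def]
    simp only
    rw [show (1:ℝ) - p - 1 = -p by ring, Real.rpow_neg hx'.le, div_eq_mul_inv]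
    ring
  have hterm1 : ∫ x in Set.Ioi (0:ℝ), T1 x = (p - 1) * A := by
    have := hsum
    rw [hterm2] at this
    linarith
  -- compare T1 with p * (F * |v|)
  have hintPF : MeasureTheory.IntegrableOn (fun x => p * (F x * |v x|)) (Set.Ioi 0) := by
    apply hardy_aux_integrable (C := p * M ^ p) hR0
    · exact continuousOn_const.mul (hcontF.mul (hu'.abs.continuousOn))
    · intro x hx
      rw [abs_mul, abs_of_nonneg hp0.le, abs_mul, abs_of_nonneg (hF0 x hx.1), abs_abs]
      refine mul_le_mul_of_nonneg_left ?_ hp0.le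
      calc F x * |v x| ≤ M ^ (p - 1) * M :=
            mul_le_mul (hFb x hx.1) (hMb x) (abs_nonneg _) (Real.rpow_nonneg hM0.le _)
        _ = M ^ p := by
            rw [← Real.rpow_add_one (ne_of_gt hM0)]; norm_num
    · intro x hx
      rw [hFR x hx]
      ring
  have hmono : ∫ x in Set.Ioi (0:ℝ), T1 x ≤ ∫ x in Set.Ioi (0:ℝ), p * (F x * |v x|) := by
    apply MeasureTheory.setIntegral_mono_on hintT1 hintPF measurableSet_Ioi
    intro x hx
    calc T1 x ≤ |T1 x| := le_abs_self _
      _ = p * (F x * |v x|) := hT1abs x hx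
  -- Hölder
  have hFnn : 0 ≤ᵐ[volume.restrict (Set.Ioi (0:ℝ))] F := by
    filter_upwards [MeasureTheory.ae_restrict_mem measurableSet_Ioi] with x hx
    exact hF0 x hx
  have hvnn : 0 ≤ᵐ[volume.restrict (Set.Ioi (0:ℝ))] (fun x => |v x|) := by
    filter_upwards with x using abs_nonneg _
  have hFsupp : HasCompactSupport F := by
    apply hc.mono
    intro x hx
    simp only [Function.mem_support, hFdef] at hx ⊢
    intro hux
    apply hx
    rw [hux]
    simp [Real.zero_rpow (ne_of_gt hp1)]
  have hvsupp : HasCompactSupport (fun x => |v x|) := by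
    apply (hc.deriv).mono
    intro x hx
    simp only [Function.mem_support] at hx ⊢
    simpa using hx
  have hFmem : MeasureTheory.MemLp F (ENNReal.ofReal q)
      (volume.restrict (Set.Ioi (0:ℝ))) := by
    apply hFsupp.memLp_of_bound
      (hcontF.aestronglyMeasurable measurableSet_Ioi) (M ^ (p-1))
    filter_upwards [MeasureTheory.ae_restrict_mem measurableSet_Ioi] with x hx
    rw [Real.norm_eq_abs, abs_of_nonneg (hF0 x hx)]
    exact hFb x hx
  have hvmem : MeasureTheory.MemLp (fun x => |v x|) (ENNReal.ofReal p)
      (volume.restrict (Set.Ioi (0:ℝ))) := by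
    apply hvsupp.memLp_of_bound (hu'.abs.aestronglyMeasurable) M
    filter_upwards with x
    rw [Real.norm_eq_abs, abs_abs]
    exact hMb x
  have hHolder : ∫ x in Set.Ioi (0:ℝ), F x * |v x| ≤ A ^ (1/q) * B ^ (1/p) := by
    have h := MeasureTheory.integral_mul_le_Lp_mul_Lq_of_nonneg hpq hFnn hvnn hFmem hvmem
    have hFq : ∫ x in Set.Ioi (0:ℝ), F x ^ q = A := by
      rw [hA]
      apply MeasureTheory.setIntegral_congr_fun measurableSet_Ioi
      intro x hx
      have hx' : (0:ℝ) < x := hx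
      rw [hFdef]
      simp only
      rw [Real.mul_rpow (Real.rpow_nonneg (abs_nonneg _) _) (Real.rpow_nonneg hx'.le _),
        ← Real.rpow_mul (abs_nonneg _), ← Real.rpow_mul hx'.le,
        show (p-1) * q = p by rw [hq]; field_simp,
        show (1-p) * q = -p by rw [hq]; field_simp; ring,
        Real.rpow_neg hx'.le, div_eq_mul_inv]
    rw [hFq] at h
    exact h
  -- putting it together
  have key : (p - 1) * A ≤ p * (A ^ (1/q) * B ^ (1/p)) := by
    calc (p - 1) * A = ∫ x in Set.Ioi (0:ℝ), T1 x := hterm1.symm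
      _ ≤ ∫ x in Set.Ioi (0:ℝ), p * (F x * |v x|) := hmono
      _ = p * ∫ x in Set.Ioi (0:ℝ), F x * |v x| := MeasureTheory.integral_const_mul p _
      _ ≤ p * (A ^ (1/q) * B ^ (1/p)) := mul_le_mul_of_nonneg_left hHolder hp0.le
  rcases eq_or_lt_of_le hA0 with hA' | hA'
  · rw [ge_iff_le, ← hA', mul_zero]
    exact hB0
  · have hAsplit : A = A ^ (1/q) * A ^ (1/p) := by
      rw [← Real.rpow_add hA', one_div, one_div, hpq.inv_add_inv_eq_one, Real.rpow_one]
    have hq0 : 0 < A ^ (1/q) := Real.rpow_pos_of_pos hA' _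
    have h3 : (p - 1) * A ^ (1/p) ≤ p * B ^ (1/p) := by
      have h' : A^(1/q) * ((p-1) * A^(1/p)) ≤ A^(1/q) * (p * B^(1/p)) := by
        calc A^(1/q) * ((p-1) * A^(1/p)) = (p-1) * (A^(1/q) * A^(1/p)) := by ring
          _ = (p-1) * A := by rw [← hAsplit]
          _ ≤ p * (A^(1/q) * B^(1/p)) := key
          _ = A^(1/q) * (p * B^(1/p)) := by ring
      exact le_of_mul_le_mul_left h' hq0
    have h4 : ((p - 1) / p) * A ^ (1/p) ≤ B ^ (1/p) := by
      rw [div_mul_eq_mul_div, div_le_iff₀ hp0]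
      calc (p - 1) * A ^ (1/p) ≤ p * B ^ (1/p) := h3
        _ = B ^ (1/p) * p := by ring
    have h5 := Real.rpow_le_rpow (by positivity) h4 hp0.le
    rw [Real.mul_rpow (by positivity) (Real.rpow_nonneg hA0 _),
      ← Real.rpow_mul hA0, ← Real.rpow_mul hB0,
      one_div, inv_mul_cancel₀ (ne_of_gt hp0), Real.rpow_one, Real.rpow_one] at h5
    exact h5
end

section
/- For n ≥ 1, α ∈ ℝ and u ∈ C¹_c(ℝⁿ \ {0}), one has ∫_{ℝⁿ} |∂_r u|² |x|^{−α} dx − ((n−2−α)/2)² ∫_{ℝⁿ} u² |x|^{−α−2} dx = ∫_{ℝⁿ} |∂_r u + (n−2−α)/(2|x|) · u|² |x|^{−α} dx, where ∂_r u = (x/|x|)·∇u is the radial derivative. -/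
open MeasureTheory Real RealInnerProductSpace

noncomputable section

abbrev Euc (n : ℕ) := EuclideanSpace ℝ (Fin n)

/-- radial derivative ∂_r f = (x/|x|)·∇f -/
noncomputable def rDeriv (n : ℕ) (f : Euc n → ℝ) (x : Euc n) : ℝ :=
  inner ℝ x (gradient f x) / ‖x‖

/-- T_α f = ∂_r f + ((n-2-α)/(2r)) f -/
noncomputable def Tw (n : ℕ) (α : ℝ) (f : Euc n → ℝ) (x : Euc n) : ℝ :=
  rDeriv n f x + (((n : ℝ) - 2 - α) / (2 * ‖x‖)) * f x

/-- spherical derivative L_j f = ∂_j f − (x_j/r) ∂_r f -/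
noncomputable def Lop (n : ℕ) (j : Fin n) (f : Euc n → ℝ) (x : Euc n) : ℝ :=
  fderiv ℝ f x (EuclideanSpace.single j 1) - (x j / ‖x‖) * rDeriv n f x

/-- Euclidean Laplacian as sum of second partial derivatives -/
noncomputable def lap (n : ℕ) (f : Euc n → ℝ) (x : Euc n) : ℝ :=
  ∑ j : Fin n,
    fderiv ℝ (fun y => fderiv ℝ f y (EuclideanSpace.single j 1)) x (EuclideanSpace.single j 1)

/-- radial Laplacian Δ_r = ∂_r² + ((n−1)/r) ∂_r -/
noncomputable def lapr (n : ℕ) (f : Euc n → ℝ) (x : Euc n) : ℝ :=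
  rDeriv n (rDeriv n f) x + (((n : ℝ) - 1) / ‖x‖) * rDeriv n f x

/-- weighted L² norm squared: ‖g‖_β² = ∫ |g|² |x|^{−β} -/
noncomputable def wnorm2 (n : ℕ) (β : ℝ) (g : Euc n → ℝ) : ℝ :=
  ∫ x : Euc n, (g x) ^ 2 * ‖x‖ ^ (-β)

end

section aux

lemma inner_grad {n : ℕ} (f : Euc n → ℝ) (x v : Euc n) :
    (inner ℝ v (gradient f x) : ℝ) = fderiv ℝ f x v := by
  rw [real_inner_comm, gradient, InnerProductSpace.toDual_symm_apply]

lemma sum_coord_smul {n : ℕ} (x : Euc n) :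
    ∑ j, x j • (EuclideanSpace.single j 1 : Euc n) = x := by
  have := (EuclideanSpace.basisFun (Fin n) ℝ).sum_repr x
  simpa [EuclideanSpace.basisFun_apply, EuclideanSpace.basisFun_repr] using this

lemma aux_integrable {n : ℕ} {K : Set (Euc n)} (hK : IsCompact K) (h0 : (0 : Euc n) ∉ K)
    {h : Euc n → ℝ} (hcont : ContinuousOn h {(0 : Euc n)}ᶜ)
    (hsupp : ∀ x ∉ K, h x = 0) : Integrable h := by
  have hcont' : Continuous h := by
    rw [continuous_iff_continuousAt]
    intro x
    by_cases hx : x = 0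
    · subst hx
      have hev : h =ᶠ[nhds (0 : Euc n)] fun _ => 0 := by
        filter_upwards [hK.isClosed.isOpen_compl.mem_nhds h0] with y hy
        exact hsupp y hy
      exact ContinuousAt.congr continuousAt_const hev.symm
    · exact hcont.continuousAt (isOpen_compl_singleton.mem_nhds hx)
  exact hcont'.integrable_of_hasCompactSupport (HasCompactSupport.intro hK hsupp)

lemma rpow_two_pow {n : ℕ} (x : Euc n) (c : ℝ) :
    ((‖x‖ ^ 2 : ℝ)) ^ (c / 2) = ‖x‖ ^ c := by
  rw [← Real.rpow_natCast ‖x‖ 2, ← Real.rpow_mul (norm_nonneg x)]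
  rw [show ((2 : ℕ) : ℝ) * (c / 2) = c by push_cast; ring]

end aux

set_option maxHeartbeats 2000000 in
theorem radial_hardy_identity (n : ℕ) (hn : 1 ≤ n) (α : ℝ) (u : Euc n → ℝ)
    (hu : ContDiff ℝ 1 u) (hc : HasCompactSupport u) (h0 : (0 : Euc n) ∉ tsupport u) :
    wnorm2 n α (rDeriv n u) - (((n : ℝ) - 2 - α) / 2) ^ 2 * wnorm2 n (α + 2) u
      = wnorm2 n α (Tw n α u) := by
  classical
  haveI : Nonempty (Fin n) := Fin.pos_iff_nonempty.mp (by omega)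
  set C : ℝ := (n : ℝ) - 2 - α with hC
  -- basic facts
  have hvol0 : volume ({(0 : Euc n)} : Set (Euc n)) = 0 := measure_singleton _
  have hudiff : Differentiable ℝ u := hu.differentiable one_ne_zero
  have hgradcont : Continuous (fun x => gradient u x) := by
    have h1 : Continuous (fderiv ℝ u) := hu.continuous_fderiv one_ne_zero
    exact (InnerProductSpace.toDual ℝ (Euc n)).symm.continuous.comp h1
  have hgrad0 : ∀ x ∉ tsupport u, gradient u x = 0 := by
    intro x hx
    have : fderiv ℝ u x = 0 := by
      have := support_fderiv_subset (𝕜 := ℝ) (f := u)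
      by_contra h
      exact hx (this h)
    rw [gradient, this, map_zero]
  have hrcont : ContinuousOn (rDeriv n u) {(0 : Euc n)}ᶜ := by
    apply ContinuousOn.div
    · exact (continuous_id.inner hgradcont).continuousOn
    · exact continuous_norm.continuousOn
    · intro x hx
      simpa using hx
  have hr0 : ∀ x ∉ tsupport u, rDeriv n u x = 0 := by
    intro x hx
    simp [rDeriv, hgrad0 x hx]
  have hu0 : ∀ x ∉ tsupport u, u x = 0 := fun x hx => image_eq_zero_of_notMem_tsupport hx
  have hwcont : ∀ γ : ℝ, ContinuousOn (fun x : Euc n => ‖x‖ ^ (γ : ℝ)) {(0 : Euc n)}ᶜ := by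
    intro γ
    apply ContinuousOn.rpow_const continuous_norm.continuousOn
    intro x hx
    left
    simpa using hx
  -- integrability of the three pieces
  have int1 : Integrable (fun x : Euc n => (rDeriv n u x) ^ 2 * ‖x‖ ^ (-α)) := by
    apply aux_integrable hc h0
    · exact ((hrcont.pow 2).mul (hwcont (-α)))
    · intro x hx; simp [hr0 x hx]
  have int2 : Integrable (fun x : Euc n => u x * rDeriv n u x * ‖x‖ ^ (-(α + 1))) := by
    apply aux_integrable hc h0
    · exact ((hu.continuous.continuousOn.mul hrcont).mul (hwcont (-(α + 1))))
    · intro x hx; simp [hu0 x hx]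
  have int3 : Integrable (fun x : Euc n => (u x) ^ 2 * ‖x‖ ^ (-(α + 2))) := by
    apply aux_integrable hc h0
    · exact ((hu.continuous.continuousOn.pow 2).mul (hwcont (-(α + 2))))
    · intro x hx; simp [hu0 x hx]
  set I2 : ℝ := ∫ x : Euc n, u x * rDeriv n u x * ‖x‖ ^ (-(α + 1)) with hI2
  -- Step A : expansion of wnorm2 of Tw
  have stepA : wnorm2 n α (Tw n α u)
      = wnorm2 n α (rDeriv n u) + (C * I2 + (C / 2) ^ 2 * wnorm2 n (α + 2) u) := by
    have hae : ∀ᵐ x : Euc n, x ≠ 0 := by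
      rw [ae_iff]
      simpa using hvol0
    have key : ∀ x : Euc n, x ≠ 0 →
        (Tw n α u x) ^ 2 * ‖x‖ ^ (-α)
          = (rDeriv n u x) ^ 2 * ‖x‖ ^ (-α)
            + (C * (u x * rDeriv n u x * ‖x‖ ^ (-(α + 1)))
              + (C / 2) ^ 2 * ((u x) ^ 2 * ‖x‖ ^ (-(α + 2)))) := by
      intro x hx
      have hr : (0 : ℝ) < ‖x‖ := norm_pos_iff.mpr hx
      have h1 : ‖x‖ ^ (-(α + 1)) = ‖x‖ ^ (-α) / ‖x‖ := by
        rw [show -(α + 1) = -α + -1 by ring, Real.rpow_add hr, Real.rpow_neg_one]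
        ring
      have h2 : ‖x‖ ^ (-(α + 2)) = ‖x‖ ^ (-α) / ‖x‖ / ‖x‖ := by
        rw [show -(α + 2) = -α + -1 + -1 by ring, Real.rpow_add hr, Real.rpow_add hr,
          Real.rpow_neg_one]
        ring
      rw [Tw, h1, h2]
      field_simp
      ring
    rw [wnorm2, wnorm2, wnorm2, hI2]
    rw [integral_congr_ae (g := fun x : Euc n =>
        (rDeriv n u x) ^ 2 * ‖x‖ ^ (-α)
          + (C * (u x * rDeriv n u x * ‖x‖ ^ (-(α + 1)))
            + (C / 2) ^ 2 * ((u x) ^ 2 * ‖x‖ ^ (-(α + 2)))))]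
    · have intB : Integrable (fun x : Euc n =>
          C * (u x * rDeriv n u x * ‖x‖ ^ (-(α + 1)))) := int2.const_mul C
      have intD : Integrable (fun x : Euc n =>
          (C / 2) ^ 2 * ((u x) ^ 2 * ‖x‖ ^ (-(α + 2)))) := int3.const_mul ((C / 2) ^ 2)
      have intBD : Integrable (fun x : Euc n =>
          C * (u x * rDeriv n u x * ‖x‖ ^ (-(α + 1)))
            + (C / 2) ^ 2 * ((u x) ^ 2 * ‖x‖ ^ (-(α + 2)))) := intB.add intD
      rw [integral_add int1 intBD, integral_add intB intD,
        integral_const_mul, integral_const_mul]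
    · filter_upwards [hae] with x hx
      exact key x hx
  -- Step B : integration by parts, 2 * I2 = -C * wnorm2 (α+2) u
  have stepB : 2 * I2 = -C * wnorm2 n (α + 2) u := by
    -- geometric setup
    obtain ⟨ε, hε, hball⟩ : ∃ ε > 0, Metric.ball (0 : Euc n) ε ⊆ (tsupport u)ᶜ := by
      have hmem : (tsupport u)ᶜ ∈ nhds (0 : Euc n) :=
        (isClosed_tsupport u).isOpen_compl.mem_nhds h0
      obtain ⟨ε, hε, hsub⟩ := Metric.mem_nhds_iff.mp hmem
      exact ⟨ε, hε, hsub⟩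
    obtain ⟨R, hRpos, hKR⟩ : ∃ R > 0, tsupport u ⊆ Metric.ball (0 : Euc n) R := by
      obtain ⟨R, hR1, hR2⟩ := hc.isBounded.subset_ball_lt 0 0
      exact ⟨R, hR1, hR2⟩
    have hKnorm : ∀ x ∈ tsupport u, ε ≤ ‖x‖ := by
      intro x hx
      by_contra h
      push_neg at h
      exact (hball (by simpa [Metric.mem_ball, dist_zero_right] using h)) hx
    -- cutoff function
    set b1 : ContDiffBump (0 : Euc n) :=
      ⟨ε / 4, ε / 2, by positivity, by linarith⟩ with hb1
    set b2 : ContDiffBump (0 : Euc n) := ⟨R, R + 1, hRpos, by linarith⟩ with hb2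
    set χ : Euc n → ℝ := fun y => (1 - b1 y) * b2 y with hχ
    set V : Set (Euc n) := {y | ε / 2 < ‖y‖} ∩ Metric.ball (0 : Euc n) R with hV
    have hVopen : IsOpen V :=
      (isOpen_lt continuous_const continuous_norm).inter Metric.isOpen_ball
    have hKV : tsupport u ⊆ V := by
      intro x hx
      exact ⟨by have := hKnorm x hx; simp only [Set.mem_setOf_eq]; linarith, hKR hx⟩
    have hχV : ∀ y ∈ V, χ y = 1 := by
      intro y hy
      have h1 : b1 y = 0 := b1.zero_of_le_dist (by
        simpa [dist_zero_right] using hy.1.le)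
      have h2 : b2 y = 1 := b2.one_of_mem_closedBall (by
        have := Metric.mem_ball.mp hy.2
        simp only [Metric.mem_closedBall]
        linarith)
      simp [hχ, h1, h2]
    have hχ0 : ∀ y : Euc n, ‖y‖ < ε / 4 → χ y = 0 := by
      intro y hy
      have h1 : b1 y = 1 := b1.one_of_mem_closedBall (by
        simp only [Metric.mem_closedBall, dist_zero_right, hb1]; linarith)
      simp [hχ, h1]
    have hχout : ∀ y : Euc n, R + 1 ≤ ‖y‖ → χ y = 0 := by
      intro y hy
      have h2 : b2 y = 0 := b2.zero_of_le_dist (by simpa [dist_zero_right] using hy)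
      simp [hχ, h2]
    have hχsmooth : ContDiff ℝ 1 χ :=
      (contDiff_const.sub b1.contDiff).mul b2.contDiff
    -- the vector field
    set p : ℝ := -(α + 2) / 2 with hp
    set Fj : Fin n → Euc n → ℝ := fun j y => y j * ((‖y‖ ^ 2 : ℝ)) ^ p with hFj
    set G : Fin n → Euc n → ℝ := fun j y => χ y * Fj j y with hG
    set e : Fin n → Euc n := fun j => EuclideanSpace.single j 1 with he
    set w : Euc n → ℝ := fun y => u y * u y with hwdef
    have hpow_eq : ∀ y : Euc n, ((‖y‖ ^ 2 : ℝ)) ^ p = ‖y‖ ^ (-(α + 2)) := fun y =>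
      rpow_two_pow y (-(α + 2))
    -- derivative of Fj at x ≠ 0
    have hFd : ∀ (x : Euc n), x ≠ 0 → ∀ j, HasFDerivAt (Fj j)
        ((x j) • ((p * ((‖x‖ ^ 2 : ℝ)) ^ (p - 1)) • ((2 : ℕ) • (innerSL ℝ x)))
          + ((‖x‖ ^ 2 : ℝ)) ^ p • (EuclideanSpace.proj j : Euc n →L[ℝ] ℝ)) x := by
      intro x hx j
      have hrx : (0 : ℝ) < ‖x‖ := norm_pos_iff.mpr hx
      have hQpos : (0 : ℝ) < ‖x‖ ^ 2 := by positivity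
      have hQd : HasFDerivAt (fun y : Euc n => ‖y‖ ^ 2) ((2 : ℕ) • (innerSL ℝ x)) x :=
        (hasStrictFDerivAt_norm_sq x).hasFDerivAt
      have hPow : HasFDerivAt (fun y : Euc n => ((‖y‖ ^ 2 : ℝ)) ^ p)
          ((p * ((‖x‖ ^ 2 : ℝ)) ^ (p - 1)) • ((2 : ℕ) • (innerSL ℝ x))) x :=
        by have := (Real.hasDerivAt_rpow_const (x := ‖x‖ ^ 2) (p := p) (Or.inl hQpos.ne')).comp_hasFDerivAt x hQd; exact this
      have hproj : HasFDerivAt (fun y : Euc n => y j)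
          (EuclideanSpace.proj j : Euc n →L[ℝ] ℝ) x :=
        (EuclideanSpace.proj j : Euc n →L[ℝ] ℝ).hasFDerivAt
      exact hproj.mul hPow
    -- divergence computation
    have hdiv : ∀ (x : Euc n), x ≠ 0 →
        ∑ j, fderiv ℝ (Fj j) x (e j) = C * ‖x‖ ^ (-(α + 2)) := by
      intro x hx
      have hrx : (0 : ℝ) < ‖x‖ := norm_pos_iff.mpr hx
      have hQpos : (0 : ℝ) < ‖x‖ ^ 2 := by positivity
      have hxx : ∑ j, x j * x j = ‖x‖ ^ 2 := by
        rw [← real_inner_self_eq_norm_sq]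
        simp only [PiLp.inner_apply, RCLike.inner_apply, conj_trivial]
      have hQp : ((‖x‖ ^ 2 : ℝ)) ^ (p - 1) * (‖x‖ ^ 2) = ((‖x‖ ^ 2 : ℝ)) ^ p := by
        have h1 : ((‖x‖ ^ 2 : ℝ)) ^ (p - 1) * ((‖x‖ ^ 2 : ℝ)) ^ (1 : ℝ)
            = ((‖x‖ ^ 2 : ℝ)) ^ (p - 1 + 1) := (Real.rpow_add hQpos _ _).symm
        rw [Real.rpow_one] at h1
        rw [h1, sub_add_cancel]
      have heval : ∀ j, fderiv ℝ (Fj j) x (e j)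
          = x j * (p * ((‖x‖ ^ 2 : ℝ)) ^ (p - 1) * (2 * (x j)))
            + ((‖x‖ ^ 2 : ℝ)) ^ p := by
        intro j
        rw [(hFd x hx j).fderiv]
        have hinner : (innerSL ℝ x) (e j) = x j := by
          simp [he, real_inner_comm, EuclideanSpace.inner_single_left, EuclideanSpace.inner_single_right]
        have hproj : (EuclideanSpace.proj j : Euc n →L[ℝ] ℝ) (e j) = 1 := by
          simp [he, EuclideanSpace.single_apply]
        simp only [ContinuousLinearMap.add_apply, ContinuousLinearMap.smul_apply, hinner, hproj,
          smul_eq_mul]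
        ring
      calc ∑ j, fderiv ℝ (Fj j) x (e j)
          = ∑ j, ((2 * p * ((‖x‖ ^ 2 : ℝ)) ^ (p - 1)) * (x j * x j)
              + ((‖x‖ ^ 2 : ℝ)) ^ p) := by
            refine Finset.sum_congr rfl fun j _ => ?_
            rw [heval j]; ring
        _ = (2 * p * ((‖x‖ ^ 2 : ℝ)) ^ (p - 1)) * (∑ j, x j * x j)
              + (n : ℝ) * ((‖x‖ ^ 2 : ℝ)) ^ p := by
            rw [Finset.sum_add_distrib, ← Finset.mul_sum, Finset.sum_const,
              Finset.card_univ, Fintype.card_fin, nsmul_eq_mul]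
        _ = C * ‖x‖ ^ (-(α + 2)) := by
            rw [hxx, mul_assoc, hQp, hpow_eq x, hC, hp]
            ring
    -- regularity of G
    have hGcd : ∀ j, ContDiff ℝ 1 (G j) := by
      intro j
      rw [contDiff_iff_contDiffAt]
      intro x
      by_cases hx : ‖x‖ < ε / 4
      · have hev : G j =ᶠ[nhds x] fun _ => 0 := by
          have hopen : IsOpen {y : Euc n | ‖y‖ < ε / 4} :=
            isOpen_lt continuous_norm continuous_const
          filter_upwards [hopen.mem_nhds hx] with y hy
          simp [hG, hχ0 y hy]
        exact ContDiffAt.congr_of_eventuallyEq contDiffAt_const hev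
      · have hx0 : x ≠ 0 := by
          intro h
          rw [h] at hx
          simp at hx
          linarith
        have hrx : (0 : ℝ) < ‖x‖ := norm_pos_iff.mpr hx0
        have hQpos : (0 : ℝ) < ‖x‖ ^ 2 := by positivity
        refine ContDiffAt.mul hχsmooth.contDiffAt (ContDiffAt.mul ?_ ?_)
        · exact (EuclideanSpace.proj j : Euc n →L[ℝ] ℝ).contDiff.contDiffAt
        · exact ContDiffAt.rpow_const_of_ne
            ((contDiff_norm_sq ℝ).contDiffAt) hQpos.ne'
    have hGdiff : ∀ j, Differentiable ℝ (G j) := fun j => (hGcd j).differentiable one_ne_zero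
    have hGcont : ∀ j, Continuous (G j) := fun j => (hGcd j).continuous
    have hGcs : ∀ j, HasCompactSupport (G j) := by
      intro j
      apply HasCompactSupport.intro (isCompact_closedBall (0 : Euc n) (R + 1))
      intro x hx
      have : R + 1 ≤ ‖x‖ := by
        simp only [Metric.mem_closedBall, dist_zero_right, not_le] at hx
        linarith
      simp [hG, hχout x this]
    -- w facts
    have hwcd : ContDiff ℝ 1 w := hu.mul hu
    have hwcs : HasCompactSupport w := by
      apply HasCompactSupport.intro hc
      intro x hx
      simp [hwdef, hu0 x hx]
    have hwdiff : Differentiable ℝ w := hwcd.differentiable one_ne_zero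
    obtain ⟨Lw, hLw⟩ := ContDiff.lipschitzWith_of_hasCompactSupport hwcs hwcd one_ne_zero
    have hLG : ∀ j, ∃ L, LipschitzWith L (G j) := fun j =>
      ContDiff.lipschitzWith_of_hasCompactSupport (hGcs j) (hGcd j) one_ne_zero
    -- integration by parts per coordinate
    have hIBP : ∀ j, (∫ x : Euc n, lineDeriv ℝ w x (e j) * G j x)
        = ∫ x : Euc n, lineDeriv ℝ (G j) x (-(e j)) * w x := by
      intro j
      obtain ⟨Lg, hLg⟩ := hLG j
      exact hLw.integral_lineDeriv_mul_eq hLg (hGcs j) (e j)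
    -- rewrite lineDerivs as fderivs
    have hld1 : ∀ j, (fun x : Euc n => lineDeriv ℝ w x (e j) * G j x)
        = fun x => fderiv ℝ w x (e j) * G j x := by
      intro j
      funext x
      rw [(hwdiff x).lineDeriv_eq_fderiv]
    have hld2 : ∀ j, (fun x : Euc n => lineDeriv ℝ (G j) x (-(e j)) * w x)
        = fun x => fderiv ℝ (G j) x (-(e j)) * w x := by
      intro j
      funext x
      rw [((hGdiff j) x).lineDeriv_eq_fderiv]
    -- integrability of the coordinate integrands
    have intS1 : ∀ j, Integrable (fun x : Euc n => lineDeriv ℝ w x (e j) * G j x) := by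
      intro j
      rw [hld1 j]
      apply Continuous.integrable_of_hasCompactSupport
      · exact ((hwcd.continuous_fderiv one_ne_zero).clm_apply continuous_const).mul (hGcont j)
      · apply HasCompactSupport.intro (isCompact_closedBall (0 : Euc n) (R + 1))
        intro x hx
        have : R + 1 ≤ ‖x‖ := by
          simp only [Metric.mem_closedBall, dist_zero_right, not_le] at hx
          linarith
        simp [hG, hχout x this]
    have intS2 : ∀ j, Integrable (fun x : Euc n => lineDeriv ℝ (G j) x (-(e j)) * w x) := by
      intro j
      rw [hld2 j]
      apply Continuous.integrable_of_hasCompactSupport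
      · exact (((hGcd j).continuous_fderiv one_ne_zero).clm_apply continuous_const).mul
          hwcd.continuous
      · apply HasCompactSupport.intro hc
        intro x hx
        simp [hwdef, hu0 x hx]
    -- pointwise identification of the two sums
    have pointwise1 : ∀ x : Euc n, x ≠ 0 →
        ∑ j, lineDeriv ℝ w x (e j) * G j x
          = 2 * (u x * rDeriv n u x * ‖x‖ ^ (-(α + 1))) := by
      intro x hx
      have hr : (0 : ℝ) < ‖x‖ := norm_pos_iff.mpr hx
      have hld : ∀ j, lineDeriv ℝ w x (e j) = fderiv ℝ w x (e j) := fun j =>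
        (hwdiff x).lineDeriv_eq_fderiv
      by_cases hxs : x ∈ tsupport u
      · have hxV := hKV hxs
        have hGval : ∀ j, G j x = x j * ‖x‖ ^ (-(α + 2)) := by
          intro j
          have hGx : G j x = χ x * (x j * ((‖x‖ ^ 2 : ℝ)) ^ p) := rfl
          rw [hGx, hχV x hxV, one_mul, hpow_eq x]
        have hDx : ∑ j, fderiv ℝ w x (e j) * x j = fderiv ℝ w x x := by
          calc ∑ j, fderiv ℝ w x (e j) * x j
              = ∑ j, fderiv ℝ w x (x j • e j) := by
                refine Finset.sum_congr rfl fun j _ => ?_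
                rw [ContinuousLinearMap.map_smul]
                simp [smul_eq_mul, mul_comm]
            _ = fderiv ℝ w x (∑ j, x j • e j) := (map_sum _ _ _).symm
            _ = fderiv ℝ w x x := by
                simp only [he]
                rw [sum_coord_smul]
        have hfw : fderiv ℝ w x x = 2 * u x * (rDeriv n u x * ‖x‖) := by
          have h1 : fderiv ℝ w x = u x • fderiv ℝ u x + u x • fderiv ℝ u x :=
            fderiv_mul (hudiff x) (hudiff x)
          have h2 : fderiv ℝ u x x = rDeriv n u x * ‖x‖ := by
            rw [← inner_grad u x x, rDeriv]
            field_simp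
          rw [h1]
          simp [smul_eq_mul, h2]
          ring
        have hnorm : ‖x‖ * ‖x‖ ^ (-(α + 2)) = ‖x‖ ^ (-(α + 1)) := by
          nth_rewrite 1 [← Real.rpow_one ‖x‖]
          rw [← Real.rpow_add hr]
          ring_nf
        calc ∑ j, lineDeriv ℝ w x (e j) * G j x
            = ∑ j, fderiv ℝ w x (e j) * x j * ‖x‖ ^ (-(α + 2)) := by
              refine Finset.sum_congr rfl fun j _ => ?_
              rw [hld j, hGval j]; ring
          _ = (∑ j, fderiv ℝ w x (e j) * x j) * ‖x‖ ^ (-(α + 2)) := by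
              rw [Finset.sum_mul]
          _ = 2 * (u x * rDeriv n u x * ‖x‖ ^ (-(α + 1))) := by
              rw [hDx, hfw, ← hnorm]; ring
      · have hfw0 : fderiv ℝ w x = 0 := by
          have hev : w =ᶠ[nhds x] fun _ => 0 := by
            filter_upwards [(isClosed_tsupport u).isOpen_compl.mem_nhds hxs] with y hy
            simp [hwdef, hu0 y hy]
          rw [hev.fderiv_eq, fderiv_fun_const]
          rfl
        simp [hld, hfw0, hu0 x hxs]
    have pointwise2 : ∀ x : Euc n,
        ∑ j, lineDeriv ℝ (G j) x (-(e j)) * w x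
          = -C * ((u x) ^ 2 * ‖x‖ ^ (-(α + 2))) := by
      intro x
      by_cases hxs : x ∈ tsupport u
      · have hxV := hKV hxs
        have hx0 : x ≠ 0 := fun h => h0 (h ▸ hxs)
        have hGF : ∀ j, fderiv ℝ (G j) x = fderiv ℝ (Fj j) x := by
          intro j
          apply Filter.EventuallyEq.fderiv_eq
          filter_upwards [hVopen.mem_nhds hxV] with y hy
          simp [hG, hχV y hy]
        have hw2 : w x = (u x) ^ 2 := by simp [hwdef, sq]
        calc ∑ j, lineDeriv ℝ (G j) x (-(e j)) * w x
            = ∑ j, -(fderiv ℝ (Fj j) x (e j)) * w x := by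
              refine Finset.sum_congr rfl fun j _ => ?_
              rw [((hGdiff j) x).lineDeriv_eq_fderiv, hGF j, map_neg]
          _ = -(∑ j, fderiv ℝ (Fj j) x (e j)) * w x := by
              rw [← Finset.sum_neg_distrib, Finset.sum_mul]
          _ = -C * ((u x) ^ 2 * ‖x‖ ^ (-(α + 2))) := by
              rw [hdiv x hx0, hw2]; ring
      · simp [((hGdiff _) x).lineDeriv_eq_fderiv, hwdef, hu0 x hxs]
    -- assemble
    have hae : ∀ᵐ x : Euc n, x ≠ 0 := by
      rw [ae_iff]
      simpa using hvol0
    calc 2 * I2 = ∫ x : Euc n, 2 * (u x * rDeriv n u x * ‖x‖ ^ (-(α + 1))) := by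
          rw [hI2, integral_const_mul]
      _ = ∫ x : Euc n, ∑ j, lineDeriv ℝ w x (e j) * G j x := by
          apply integral_congr_ae
          filter_upwards [hae] with x hx
          exact (pointwise1 x hx).symm
      _ = ∑ j, ∫ x : Euc n, lineDeriv ℝ w x (e j) * G j x :=
          integral_finset_sum Finset.univ fun j _ => intS1 j
      _ = ∑ j, ∫ x : Euc n, lineDeriv ℝ (G j) x (-(e j)) * w x :=
          Finset.sum_congr rfl fun j _ => hIBP j
      _ = ∫ x : Euc n, ∑ j, lineDeriv ℝ (G j) x (-(e j)) * w x :=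
          (integral_finset_sum Finset.univ fun j _ => intS2 j).symm
      _ = ∫ x : Euc n, -C * ((u x) ^ 2 * ‖x‖ ^ (-(α + 2))) := by
          apply integral_congr_ae
          exact Filter.Eventually.of_forall fun x => pointwise2 x
      _ = -C * wnorm2 n (α + 2) u := by
          rw [integral_const_mul, wnorm2]
  rw [stepA]
  linear_combination (-(C / 2)) * stepB
end

section
/- For n ≥ 1, α ∈ ℝ and u ∈ C¹_c(ℝⁿ \ {0}), one has ∫_{ℝⁿ} |∇u|² |x|^{−α} dx − ((n−2−α)/2)² ∫_{ℝⁿ} u² |x|^{−α−2} dx = ∫_{ℝⁿ} |∇(|x|^{(n−2−α)/2} u)|² |x|^{−(n−2)} dx. -/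
open MeasureTheory Real RealInnerProductSpace

lemma clm_expand {n : ℕ} (L : Euc n →L[ℝ] ℝ) (x : Euc n) :
    L x = ∑ j, x j * L (EuclideanSpace.single j 1) := by
  have hx : x = ∑ j, x j • EuclideanSpace.single j (1:ℝ) := by
    have := (EuclideanSpace.basisFun (Fin n) ℝ).sum_repr x
    simpa [EuclideanSpace.basisFun_apply] using this.symm
  conv_lhs => rw [hx]
  simp [map_sum]

lemma myHasFDerivAt_norm_rpow {n : ℕ} (c : ℝ) {x : Euc n} (hx : x ≠ 0) :
    HasFDerivAt (fun y : Euc n => ‖y‖ ^ c) ((c * ‖x‖ ^ (c - 2)) • innerSL ℝ x) x := by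
  have hr : (0:ℝ) < ‖x‖ := norm_pos_iff.2 hx
  have h1 : HasFDerivAt (fun y : Euc n => ‖y‖ ^ 2) (2 • innerSL ℝ x) x :=
    (hasStrictFDerivAt_norm_sq x).hasFDerivAt
  have h2 : HasDerivAt (fun t : ℝ => t ^ (c/2)) ((c/2) * (‖x‖^2) ^ (c/2 - 1)) (‖x‖^2) :=
    Real.hasDerivAt_rpow_const (Or.inl (by positivity))
  have h3 := h2.comp_hasFDerivAt x h1
  simp only [Function.comp_def] at h3
  have key : (fun y : Euc n => (‖y‖ ^ 2 : ℝ) ^ (c/2)) = fun y : Euc n => ‖y‖ ^ c := by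
    funext y
    rw [← Real.rpow_natCast ‖y‖ 2, ← Real.rpow_mul (norm_nonneg _)]
    congr 1
    push_cast; ring
  rw [key] at h3
  have hxx : ((‖x‖:ℝ)^2) ^ (c/2-1) = ‖x‖^(c-2) := by
    rw [← Real.rpow_natCast ‖x‖ 2, ← Real.rpow_mul (norm_nonneg _)]
    congr 1
    push_cast; ring
  refine h3.congr_fderiv ?_
  ext y
  simp [hxx]
  ring

lemma toDual_symm_innerSL {n : ℕ} (x : Euc n) :
    (InnerProductSpace.toDual ℝ (Euc n)).symm (innerSL ℝ x) = x := by
  apply (InnerProductSpace.toDual ℝ (Euc n)).injective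
  simp
  rfl

lemma gradient_prod_rpow {n : ℕ} (β : ℝ) {u : Euc n → ℝ} (hu : ContDiff ℝ 1 u)
    {x : Euc n} (hx : x ≠ 0) :
    gradient (fun y : Euc n => ‖y‖ ^ β * u y) x
      = ‖x‖ ^ β • gradient u x + (u x * (β * ‖x‖ ^ (β - 2))) • x := by
  have hd : HasFDerivAt u (fderiv ℝ u x) x :=
    ((hu.differentiable one_ne_zero) x).hasFDerivAt
  have hv : HasFDerivAt (fun y : Euc n => ‖y‖ ^ β * u y) _ x := (myHasFDerivAt_norm_rpow β hx).mul hd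
  have h2 : gradient (fun y : Euc n => ‖y‖ ^ β * u y) x
      = (InnerProductSpace.toDual ℝ (Euc n)).symm (fderiv ℝ (fun y : Euc n => ‖y‖ ^ β * u y) x) := rfl
  rw [h2, hv.fderiv, map_add, LinearIsometryEquiv.map_smul, LinearIsometryEquiv.map_smul,
    LinearIsometryEquiv.map_smul, toDual_symm_innerSL, smul_smul]
  rfl

lemma inner_gradient {n : ℕ} (u : Euc n → ℝ) (x y : Euc n) :
    ⟪gradient u x, y⟫ = fderiv ℝ u x y := by
  have h2 : gradient u x
      = (InnerProductSpace.toDual ℝ (Euc n)).symm (fderiv ℝ u x) := rfl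
  rw [h2, InnerProductSpace.toDual_symm_apply]

lemma pointwise_id {n : ℕ} (α : ℝ) {u : Euc n → ℝ} (hu : ContDiff ℝ 1 u)
    {x : Euc n} (hx : x ≠ 0) :
    ‖gradient (fun y : Euc n => ‖y‖ ^ (((n:ℝ)-2-α)/2) * u y) x‖ ^ 2 * ‖x‖ ^ (-((n:ℝ)-2)) =
      ‖gradient u x‖ ^ 2 * ‖x‖ ^ (-α)
        + (((n:ℝ)-2-α)/2) ^ 2 * (u x ^ 2 * ‖x‖ ^ (-(α+2)))
        + 2 * (((n:ℝ)-2-α)/2) * (u x * fderiv ℝ u x x * ‖x‖ ^ (-(α+2))) := by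
  set β := ((n:ℝ)-2-α)/2 with hβ
  have hr : (0:ℝ) < ‖x‖ := norm_pos_iff.2 hx
  rw [gradient_prod_rpow β hu hx]
  set r := ‖x‖
  set G := gradient u x
  set U := u x
  have hGx : ⟪G, x⟫ = fderiv ℝ u x x := inner_gradient u x x
  have hnorm : ‖r ^ β • G + (U * (β * r ^ (β-2))) • x‖ ^ 2
      = (r^β)^2 * ‖G‖^2 + 2 * (r^β * (U * (β * r^(β-2)))) * fderiv ℝ u x x
        + (U * (β * r^(β-2)))^2 * r^2 := by
    rw [norm_add_sq_real, real_inner_smul_left, real_inner_smul_right, hGx]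
    simp only [norm_smul, Real.norm_eq_abs, mul_pow, sq_abs]
    ring
  rw [hnorm]
  have e1 : r^β * r^β * r^(-((n:ℝ)-2)) = r^(-α) := by
    rw [← Real.rpow_add hr, ← Real.rpow_add hr]
    congr 1
    rw [hβ]; ring
  have e2 : r^β * r^(β-2) * r^(-((n:ℝ)-2)) = r^(-(α+2)) := by
    rw [← Real.rpow_add hr, ← Real.rpow_add hr]
    congr 1
    rw [hβ]; ring
  have e3 : r^(β-2) * r^(β-2) * (r:ℝ)^(2:ℕ) * r^(-((n:ℝ)-2)) = r^(-(α+2)) := by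
    rw [← Real.rpow_natCast r 2, ← Real.rpow_add hr, ← Real.rpow_add hr, ← Real.rpow_add hr]
    congr 1
    rw [hβ]; push_cast; ring
  linear_combination (‖G‖^2) * e1 + (2*β*U* fderiv ℝ u x x) * e2 + (β^2 * U^2) * e3

lemma exists_cutoff {n : ℕ} {S : Set (Euc n)} (hS : IsCompact S) (h0 : (0:Euc n) ∉ S) :
    ∃ (χ : Euc n → ℝ) (δ : ℝ) (O : Set (Euc n)), 0 < δ ∧ ContDiff ℝ 1 χ ∧
      HasCompactSupport χ ∧ (∀ x ∈ Metric.ball (0 : Euc n) δ, χ x = 0) ∧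
      IsOpen O ∧ S ⊆ O ∧ (∀ x ∈ O, χ x = 1) ∧ (∀ x ∈ O, x ≠ 0) := by
  obtain ⟨ε, hε, hball⟩ := Metric.mem_nhds_iff.1 (hS.isClosed.isOpen_compl.mem_nhds h0)
  obtain ⟨r, hr⟩ := hS.isBounded.subset_ball (0 : Euc n)
  set R : ℝ := max r 1 with hR
  have hR1 : (1:ℝ) ≤ R := le_max_right _ _
  have hRpos : (0:ℝ) < R := lt_of_lt_of_le one_pos hR1
  set δ : ℝ := ε / 4 with hδ
  have hδpos : 0 < δ := by positivity
  set χ : Euc n → ℝ := fun x =>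
    Real.smoothTransition ((‖x‖ - δ)/δ) * Real.smoothTransition ((2*R - ‖x‖)/R) with hχ
  refine ⟨χ, δ, {x | 2*δ < ‖x‖} ∩ Metric.ball 0 R, hδpos, ?_, ?_, ?_, ?_, ?_, ?_, ?_⟩
  · -- ContDiff
    rw [contDiff_iff_contDiffAt]
    intro x
    by_cases hx : ‖x‖ < δ
    · have hev : χ =ᶠ[nhds x] (fun _ => 0) := by
        filter_upwards [Metric.ball_mem_nhds x (show 0 < δ - ‖x‖ by linarith)] with y hy
        have : ‖y‖ < δ := by
          have := norm_sub_norm_le y x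
          rw [Metric.mem_ball, dist_eq_norm] at hy
          have h2 := dist_eq_norm y x ▸ hy
          nlinarith [norm_sub_norm_le y x, norm_nonneg x]
        simp only [hχ]
        rw [Real.smoothTransition.zero_of_nonpos, zero_mul]
        apply div_nonpos_of_nonpos_of_nonneg <;> linarith
      exact (contDiffAt_const (c := (0:ℝ))).congr_of_eventuallyEq hev
    · push_neg at hx
      have hx0 : x ≠ 0 := by
        intro h; rw [h, norm_zero] at hx; linarith
      have hnorm : ContDiffAt ℝ 1 (fun y : Euc n => ‖y‖) x := contDiffAt_norm ℝ hx0
      exact ((Real.smoothTransition.contDiffAt).comp x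
          (((hnorm.sub contDiffAt_const)).div_const δ)).mul
        ((Real.smoothTransition.contDiffAt).comp x
          ((contDiffAt_const.sub hnorm).div_const R))
  · -- compact support
    apply HasCompactSupport.intro (isCompact_closedBall (0:Euc n) (2*R))
    intro x hx
    simp only [Metric.mem_closedBall, dist_zero_right, not_le] at hx
    simp only [hχ]
    apply mul_eq_zero_of_right
    exact Real.smoothTransition.zero_of_nonpos (by
      apply div_nonpos_of_nonpos_of_nonneg <;> linarith)
  · -- zero on ball
    intro x hx
    rw [Metric.mem_ball, dist_zero_right] at hx
    simp only [hχ]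
    rw [Real.smoothTransition.zero_of_nonpos (by
      apply div_nonpos_of_nonpos_of_nonneg <;> linarith), zero_mul]
  · exact (isOpen_lt continuous_const continuous_norm).inter Metric.isOpen_ball
  · -- S ⊆ O
    intro x hx
    constructor
    · have : x ∉ Metric.ball (0:Euc n) ε := fun h => hball h hx
      rw [Metric.mem_ball, dist_zero_right, not_lt] at this
      simp only [Set.mem_setOf_eq]
      rw [hδ]; linarith
    · have := hr hx
      rw [Metric.mem_ball, dist_zero_right] at this ⊢
      exact lt_of_lt_of_le this (le_max_left _ _)
  · -- χ = 1 on O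
    rintro x ⟨hx1, hx2⟩
    rw [Set.mem_setOf_eq] at hx1
    rw [Metric.mem_ball, dist_zero_right] at hx2
    simp only [hχ]
    rw [Real.smoothTransition.one_of_one_le (by rw [le_div_iff₀ hδpos]; linarith),
      Real.smoothTransition.one_of_one_le (by rw [le_div_iff₀ hRpos]; linarith), mul_one]
  · rintro x ⟨hx1, _⟩ rfl
    rw [Set.mem_setOf_eq, norm_zero] at hx1
    linarith

lemma ibp {n : ℕ} (γ : ℝ) {w : Euc n → ℝ} (hw : ContDiff ℝ 1 w) (hcw : HasCompactSupport w)
    (h0 : (0:Euc n) ∉ tsupport w) :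
    ∫ x : Euc n, fderiv ℝ w x x * ‖x‖ ^ (-γ)
      = -((n:ℝ) - γ) * ∫ x : Euc n, w x * ‖x‖ ^ (-γ) := by
  obtain ⟨χ, δ, O, hδ, hχcd, hχc, hχ0, hO, hSO, hχ1, hOne0⟩ := exists_cutoff hcw h0
  set F : Fin n → Euc n → ℝ := fun j y => χ y * (y j * ‖y‖ ^ (-γ)) with hF
  -- F j is C¹
  have hFcd : ∀ j, ContDiff ℝ 1 (F j) := by
    intro j
    rw [contDiff_iff_contDiffAt]
    intro x
    by_cases hx : ‖x‖ < δ
    · have hev : F j =ᶠ[nhds x] (fun _ => 0) := by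
        filter_upwards [Metric.ball_mem_nhds x (show 0 < δ - ‖x‖ by linarith)] with y hy
        have hyδ : y ∈ Metric.ball (0:Euc n) δ := by
          rw [Metric.mem_ball, dist_zero_right]
          rw [Metric.mem_ball, dist_eq_norm] at hy
          have := norm_sub_norm_le y x
          linarith
        simp [hF, hχ0 y hyδ]
      exact (contDiffAt_const (c := (0:ℝ))).congr_of_eventuallyEq hev
    · push_neg at hx
      have hx0 : x ≠ 0 := fun h => by rw [h, norm_zero] at hx; linarith
      have h1 : ContDiffAt ℝ 1 (fun y : Euc n => y j) x :=
        (EuclideanSpace.proj (𝕜 := ℝ) j).contDiff.contDiffAt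
      have h2 : ContDiffAt ℝ 1 (fun y : Euc n => ‖y‖ ^ (-γ)) x :=
        (contDiffAt_norm ℝ hx0).rpow_const_of_ne (by simpa using hx0)
      exact hχcd.contDiffAt.mul (h1.mul h2)
  have hFc : ∀ j, HasCompactSupport (F j) := by
    intro j
    apply hχc.mono'
    intro x hx
    simp only [hF, Function.mem_support, ne_eq] at hx
    have hχx : χ x ≠ 0 := fun h => hx (by rw [h, zero_mul])
    exact subset_tsupport χ hχx
  -- Lipschitz
  obtain ⟨Cw, hCw⟩ := hw.lipschitzWith_of_hasCompactSupport hcw one_ne_zero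
  have hwd : Differentiable ℝ w := hw.differentiable one_ne_zero
  have hFd : ∀ j, Differentiable ℝ (F j) := fun j => (hFcd j).differentiable one_ne_zero
  have key : ∀ j : Fin n,
      ∫ x : Euc n, fderiv ℝ w x (EuclideanSpace.single j 1) * F j x
        = ∫ x : Euc n, fderiv ℝ (F j) x (-(EuclideanSpace.single j 1)) * w x := by
    intro j
    obtain ⟨Cf, hCf⟩ := (hFcd j).lipschitzWith_of_hasCompactSupport (hFc j) one_ne_zero
    have := LipschitzWith.integral_lineDeriv_mul_eq (μ := volume) hCw hCf (hFc j) (EuclideanSpace.single j 1)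
    simpa only [(hwd _).lineDeriv_eq_fderiv, ((hFd j) _).lineDeriv_eq_fderiv] using this
  -- integrability
  have hfcont : Continuous fun p : Euc n => fderiv ℝ w p := hw.continuous_fderiv one_ne_zero
  have hint1 : ∀ j : Fin n, Integrable
      (fun x : Euc n => fderiv ℝ w x (EuclideanSpace.single j 1) * F j x) := by
    intro j
    apply Continuous.integrable_of_hasCompactSupport
    · exact (hfcont.clm_apply continuous_const).mul ((hFcd j).continuous)
    · exact ((hFc j).mul_left)
  have hint2 : ∀ j : Fin n, Integrable
      (fun x : Euc n => fderiv ℝ (F j) x (-(EuclideanSpace.single j 1)) * w x) := by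
    intro j
    apply Continuous.integrable_of_hasCompactSupport
    · exact (((hFcd j).continuous_fderiv one_ne_zero).clm_apply continuous_const).mul hw.continuous
    · exact hcw.mul_left
  have hsum : ∫ x : Euc n, ∑ j : Fin n, fderiv ℝ w x (EuclideanSpace.single j 1) * F j x
      = ∫ x : Euc n, ∑ j : Fin n, fderiv ℝ (F j) x (-(EuclideanSpace.single j 1)) * w x := by
    rw [integral_finset_sum _ (fun j _ => hint1 j), integral_finset_sum _ (fun j _ => hint2 j)]
    exact Finset.sum_congr rfl fun j _ => key j
  -- pointwise identification of LHS
  have hw0 : ∀ x ∉ O, fderiv ℝ w x = 0 := fun x hx =>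
    fderiv_of_notMem_tsupport ℝ (fun hh => hx (hSO hh))
  have claimL : ∀ x : Euc n, (∑ j : Fin n, fderiv ℝ w x (EuclideanSpace.single j 1) * F j x)
      = fderiv ℝ w x x * ‖x‖ ^ (-γ) := by
    intro x
    by_cases hx : x ∈ O
    · have h1 : χ x = 1 := hχ1 x hx
      simp only [hF, h1, one_mul]
      rw [clm_expand (fderiv ℝ w x) x, Finset.sum_mul]
      exact Finset.sum_congr rfl fun j _ => by ring
    · rw [hw0 x hx]
      simp
  -- pointwise identification of RHS
  have claimR : ∀ x : Euc n,
      (∑ j : Fin n, fderiv ℝ (F j) x (-(EuclideanSpace.single j 1)) * w x)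
      = -((n:ℝ) - γ) * (w x * ‖x‖ ^ (-γ)) := by
    intro x
    by_cases hx : w x = 0
    · simp [hx]
    · have hxO : x ∈ O := hSO (subset_tsupport w (by simpa [Function.mem_support] using hx))
      have hx0 : x ≠ 0 := hOne0 x hxO
      have hr : (0:ℝ) < ‖x‖ := norm_pos_iff.2 hx0
      have hDF : ∀ j : Fin n, fderiv ℝ (F j) x (EuclideanSpace.single j 1)
          = x j * (-γ * ‖x‖ ^ (-γ - 2) * x j) + ‖x‖ ^ (-γ) := by
        intro j
        have hev : F j =ᶠ[nhds x] (fun y => y j * ‖y‖ ^ (-γ)) := by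
          filter_upwards [hO.mem_nhds hxO] with y hy
          simp [hF, hχ1 y hy]
        rw [Filter.EventuallyEq.fderiv_eq hev]
        have hmul : HasFDerivAt (fun y : Euc n => y j * ‖y‖ ^ (-γ))
            ((x j) • ((-γ * ‖x‖ ^ (-γ - 2)) • innerSL ℝ x)
              + (‖x‖ ^ (-γ)) • (EuclideanSpace.proj (𝕜 := ℝ) j)) x :=
          HasFDerivAt.mul ((EuclideanSpace.proj (𝕜 := ℝ) j).hasFDerivAt)
            (myHasFDerivAt_norm_rpow (-γ) hx0)
        rw [hmul.fderiv]
        simp only [ContinuousLinearMap.add_apply, ContinuousLinearMap.smul_apply,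
          innerSL_apply_apply, smul_eq_mul]
        rw [EuclideanSpace.inner_single_right]
        simp [EuclideanSpace.single_apply]
      have hsq : (∑ j : Fin n, x j * x j) = ‖x‖ ^ 2 := by
        rw [EuclideanSpace.norm_eq, Real.sq_sqrt (Finset.sum_nonneg fun i _ => sq_nonneg _)]
        exact Finset.sum_congr rfl fun i _ => by rw [Real.norm_eq_abs, sq_abs, sq]
      have hrp : ‖x‖ ^ (-γ - 2) * ‖x‖ ^ 2 = ‖x‖ ^ (-γ) := by
        rw [← Real.rpow_natCast ‖x‖ 2, ← Real.rpow_add hr]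
        norm_num
      calc (∑ j : Fin n, fderiv ℝ (F j) x (-(EuclideanSpace.single j 1)) * w x)
          = ∑ j : Fin n, (γ * ‖x‖ ^ (-γ - 2) * (x j * x j) - ‖x‖ ^ (-γ)) * w x :=
            Finset.sum_congr rfl fun j _ => by rw [map_neg, hDF j]; ring
        _ = (γ * ‖x‖ ^ (-γ - 2) * (∑ j : Fin n, x j * x j) - (n:ℝ) * ‖x‖ ^ (-γ)) * w x := by
            rw [← Finset.sum_mul]
            congr 1
            rw [Finset.sum_sub_distrib, ← Finset.mul_sum, Finset.sum_const, Finset.card_univ,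
              Fintype.card_fin, nsmul_eq_mul]
        _ = -((n:ℝ) - γ) * (w x * ‖x‖ ^ (-γ)) := by
            rw [hsq]
            linear_combination (γ * w x) * hrp
  calc ∫ x : Euc n, fderiv ℝ w x x * ‖x‖ ^ (-γ)
      = ∫ x : Euc n, ∑ j : Fin n, fderiv ℝ w x (EuclideanSpace.single j 1) * F j x := by
        exact (integral_congr_ae (Filter.Eventually.of_forall claimL)).symm
    _ = ∫ x : Euc n, ∑ j : Fin n, fderiv ℝ (F j) x (-(EuclideanSpace.single j 1)) * w x := hsum
    _ = ∫ x : Euc n, -((n:ℝ) - γ) * (w x * ‖x‖ ^ (-γ)) :=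
        integral_congr_ae (Filter.Eventually.of_forall claimR)
    _ = -((n:ℝ) - γ) * ∫ x : Euc n, w x * ‖x‖ ^ (-γ) := integral_const_mul _ _

lemma integrable_weighted {n : ℕ} {f : Euc n → ℝ} {K : Set (Euc n)} (hf : Continuous f)
    (hK : IsCompact K) (hKc : IsClosed K) (hK0 : (0:Euc n) ∉ K)
    (hfK : ∀ x ∉ K, f x = 0) (γ : ℝ) :
    Integrable (fun x : Euc n => f x * ‖x‖ ^ γ) := by
  apply Continuous.integrable_of_hasCompactSupport
  · rw [continuous_iff_continuousAt]
    intro x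
    by_cases hx : x = 0
    · subst hx
      apply Filter.EventuallyEq.continuousAt (y := (0:ℝ))
      filter_upwards [hKc.isOpen_compl.mem_nhds hK0] with y hy
      rw [hfK y hy, zero_mul]
    · exact hf.continuousAt.mul
        ((continuous_norm.continuousAt).rpow_const (Or.inl (norm_ne_zero_iff.2 hx)))
  · exact HasCompactSupport.intro hK fun x hx => by rw [hfK x hx, zero_mul]

theorem weighted_hardy_identity (n : ℕ) (hn : 1 ≤ n) (α : ℝ) (u : Euc n → ℝ)
    (hu : ContDiff ℝ 1 u) (hc : HasCompactSupport u) (h0 : (0 : Euc n) ∉ tsupport u) :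
    wnorm2 n α (fun x => ‖gradient u x‖) - (((n : ℝ) - 2 - α) / 2) ^ 2 * wnorm2 n (α + 2) u
      = wnorm2 n ((n : ℝ) - 2)
          (fun x => ‖gradient (fun y : Euc n => ‖y‖ ^ (((n : ℝ) - 2 - α) / 2) * u y) x‖) := by
  have hud : Differentiable ℝ u := hu.differentiable one_ne_zero
  have hfcont : Continuous fun x : Euc n => fderiv ℝ u x := hu.continuous_fderiv one_ne_zero
  have hgc : Continuous fun x : Euc n => gradient u x :=
    (LinearIsometryEquiv.continuous _).comp hfcont
  set β : ℝ := ((n:ℝ) - 2 - α) / 2 with hβ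
  set A : Euc n → ℝ := fun x => ‖gradient u x‖ ^ 2 * ‖x‖ ^ (-α) with hA
  set B : Euc n → ℝ := fun x => u x ^ 2 * ‖x‖ ^ (-(α+2)) with hB
  set C : Euc n → ℝ := fun x => u x * fderiv ℝ u x x * ‖x‖ ^ (-(α+2)) with hC
  have hgu0 : ∀ x ∉ tsupport u, gradient u x = 0 := by
    intro x hx
    have : fderiv ℝ u x = 0 := fderiv_of_notMem_tsupport ℝ hx
    show (InnerProductSpace.toDual ℝ (Euc n)).symm (fderiv ℝ u x) = 0
    rw [this, map_zero]
  have hu0 : ∀ x ∉ tsupport u, u x = 0 := fun x hx => image_eq_zero_of_notMem_tsupport hx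
  -- integrability
  have hAi : Integrable A :=
    integrable_weighted ((hgc.norm).pow 2) hc (isClosed_tsupport u) h0
      (fun x hx => by simp only [Pi.pow_apply]; rw [hgu0 x hx]; simp) (-α)
  have hBi : Integrable B :=
    integrable_weighted (hu.continuous.pow 2) hc (isClosed_tsupport u) h0
      (fun x hx => by simp only [Pi.pow_apply]; rw [hu0 x hx]; ring) (-(α+2))
  have hCi : Integrable C :=
    integrable_weighted (hu.continuous.mul (hfcont.clm_apply continuous_id)) hc
      (isClosed_tsupport u) h0 (fun x hx => by simp only [Pi.mul_apply]; rw [hu0 x hx]; ring) (-(α+2))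
  -- a.e. nonzero
  haveI : Nontrivial (Euc n) := by
    refine ⟨EuclideanSpace.single ⟨0, hn⟩ (1:ℝ), 0, fun h => ?_⟩
    have := congrArg (fun z : Euc n => z ⟨0, hn⟩) h
    simp [EuclideanSpace.single_apply] at this
  have hae : ∀ᵐ x : Euc n ∂volume, x ≠ (0:Euc n) := by
    refine ae_iff.2 ?_
    have : {x : Euc n | ¬ x ≠ 0} = {(0:Euc n)} := by ext y; simp
    rw [this]
    exact measure_singleton 0
  -- rewrite RHS
  have hRHS : wnorm2 n ((n : ℝ) - 2)
        (fun x => ‖gradient (fun y : Euc n => ‖y‖ ^ (((n : ℝ) - 2 - α) / 2) * u y) x‖)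
      = (∫ x : Euc n, A x) + β^2 * (∫ x : Euc n, B x) + 2*β*(∫ x : Euc n, C x) := by
    rw [wnorm2]
    rw [integral_congr_ae (g := fun x => A x + β^2 * B x + 2*β*C x)
      (by filter_upwards [hae] with x hx; exact pointwise_id α hu hx)]
    have i2 : Integrable (fun x : Euc n => β^2 * B x) := hBi.const_mul _
    have i3 : Integrable (fun x : Euc n => 2*β * C x) := hCi.const_mul _
    have i1 : Integrable (fun x : Euc n => A x + β^2 * B x) := hAi.add i2
    rw [integral_add i1 i3, integral_add hAi i2, integral_const_mul, integral_const_mul]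
  -- IBP
  have hw : ContDiff ℝ 1 (fun x : Euc n => u x ^ 2) := hu.pow 2
  have hwc : HasCompactSupport (fun x : Euc n => u x ^ 2) :=
    HasCompactSupport.intro hc fun x hx => by rw [hu0 x hx]; ring
  have hwt : tsupport (fun x : Euc n => u x ^ 2) ⊆ tsupport u := by
    apply closure_minimal _ (isClosed_tsupport u)
    intro x hx
    simp only [Function.mem_support, ne_eq] at hx
    by_contra hxx
    exact hx (by rw [hu0 x hxx]; ring)
  have hibp := ibp (α+2) hw hwc (fun hh => h0 (hwt hh))
  have hwD : ∀ x : Euc n, fderiv ℝ (fun y : Euc n => u y ^ 2) x x = 2 * u x * fderiv ℝ u x x := by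
    intro x
    have h1 : HasFDerivAt (fun y : Euc n => u y ^ 2)
        (u x • fderiv ℝ u x + u x • fderiv ℝ u x) x := by
      have := ((hud x).hasFDerivAt.mul (hud x).hasFDerivAt)
      refine this.congr_of_eventuallyEq (Filter.Eventually.of_forall fun y => ?_)
      · simp only [Pi.mul_apply]; ring
    rw [h1.fderiv]
    simp only [ContinuousLinearMap.add_apply, ContinuousLinearMap.smul_apply, smul_eq_mul]
    ring
  have hCeq : (∫ x : Euc n, C x) = -β * (∫ x : Euc n, B x) := by
    have hL : (∫ x : Euc n, fderiv ℝ (fun y : Euc n => u y ^ 2) x x * ‖x‖ ^ (-(α+2)))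
        = ∫ x : Euc n, 2 * C x := by
      apply integral_congr_ae
      filter_upwards with x
      rw [hwD x, hC]
      ring
    rw [hL, integral_const_mul] at hibp
    have hn2 : -((n:ℝ) - (α+2)) = -(2*β) := by rw [hβ]; ring
    rw [hn2] at hibp
    have hBint : (∫ x : Euc n, (fun y : Euc n => u y ^ 2) x * ‖x‖ ^ (-(α+2)))
        = ∫ x : Euc n, B x := by rw [hB]
    rw [hBint] at hibp
    linarith
  rw [hRHS, hCeq]
  have hLl : wnorm2 n α (fun x => ‖gradient u x‖) = ∫ x : Euc n, A x := by rw [wnorm2]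
  have hL2 : wnorm2 n (α+2) u = ∫ x : Euc n, B x := by rw [wnorm2]
  rw [hLl, hL2]
  ring
end

section
/- For any α, β ∈ ℝ and f ∈ C¹_c(ℝⁿ \ {0}), ‖T_β(f)‖_α² = ‖T_α(f)‖_α² + ((β−α)²/4) ‖f‖_{α+2}², where T_γ(f) = ∂_r f + ((n−2−γ)/(2r)) f and ‖g‖_δ² = ∫_{ℝⁿ} |g|² |x|^{−δ} dx. -/
open MeasureTheory Real RealInnerProductSpace

open Filter Metric

namespace TopShiftAux

variable {n : ℕ}

lemma cont_of_locally_zero (h : Euc n → ℝ) (ε : ℝ) (hε : 0 < ε)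
    (hz : ∀ y : Euc n, ‖y‖ < ε → h y = 0)
    (hcont : ∀ x : Euc n, x ≠ 0 → ContinuousAt h x) : Continuous h := by
  rw [continuous_iff_continuousAt]
  intro x
  by_cases hx : x = 0
  · subst hx
    have hev : h =ᶠ[nhds (0 : Euc n)] (fun _ => 0) := by
      filter_upwards [Metric.ball_mem_nhds (0 : Euc n) hε] with y hy
      exact hz y (by simpa [mem_ball_zero_iff] using hy)
    exact ContinuousAt.congr continuousAt_const hev.symm
  · exact hcont x hx

lemma fderiv_zero_of_nmem {g : Euc n → ℝ} {x : Euc n} (hx : x ∉ tsupport g) :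
    fderiv ℝ g x = 0 := by
  have := support_fderiv_subset (𝕜 := ℝ) (f := g)
  by_contra h
  exact hx (this h)

lemma hasFDerivAt_w (δ : ℝ) {x : Euc n} (hx : x ≠ 0) :
    HasFDerivAt (fun y : Euc n => ‖y‖ ^ (-δ))
      ((-δ * ‖x‖ ^ (-δ - 2)) • (innerSL ℝ x : Euc n →L[ℝ] ℝ)) x := by
  have hxn : (0 : ℝ) < ‖x‖ := norm_pos_iff.2 hx
  have hpos : (0 : ℝ) < ‖x‖ ^ 2 := by positivity
  have hns : HasFDerivAt (fun y : Euc n => ‖y‖ ^ 2) (2 • (innerSL ℝ x)) x :=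
    (hasStrictFDerivAt_norm_sq x).hasFDerivAt
  have hr : HasDerivAt (fun t : ℝ => t ^ (-δ / 2))
      ((-δ / 2) * (‖x‖ ^ 2) ^ (-δ / 2 - 1)) (‖x‖ ^ 2) :=
    Real.hasDerivAt_rpow_const (Or.inl hpos.ne')
  have key : (fun y : Euc n => ‖y‖ ^ (-δ)) = fun y => ((‖y‖ ^ 2 : ℝ) ^ (-δ / 2)) := by
    funext y
    rw [← Real.rpow_natCast ‖y‖ 2, ← Real.rpow_mul (norm_nonneg _)]
    congr 1
    push_cast
    ring
  rw [key]
  have h2 := hr.comp_hasFDerivAt x hns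
  refine h2.congr_fderiv ?_
  have hs : (‖x‖ ^ 2 : ℝ) ^ (-δ / 2 - 1) = ‖x‖ ^ (-δ - 2) := by
    rw [← Real.rpow_natCast ‖x‖ 2, ← Real.rpow_mul (norm_nonneg _)]
    congr 1
    push_cast
    ring
  ext v
  simp [hs, smul_smul]
  ring

end TopShiftAux

namespace TopShiftAux

variable {n : ℕ}

local notation "sgl" j => EuclideanSpace.single j (1:ℝ)

/-- formal divergence summand -/
noncomputable def Vd (g : Euc n → ℝ) (δ : ℝ) (j : Fin n) (x : Euc n) : ℝ :=
  fderiv ℝ g x (sgl j) * (x j * ‖x‖ ^ (-δ)) +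
    g x * (‖x‖ ^ (-δ) + x j * (-δ * ‖x‖ ^ (-δ - 2) * x j))

lemma exists_eps {g : Euc n → ℝ} (h0 : (0 : Euc n) ∉ tsupport g) :
    ∃ ε > (0:ℝ), ∀ y : Euc n, ‖y‖ < ε → y ∉ tsupport g := by
  rcases Metric.isOpen_iff.1 (isClosed_tsupport g).isOpen_compl 0 h0 with ⟨ε, hε, hb⟩
  exact ⟨ε, hε, fun y hy => hb (mem_ball_zero_iff.2 hy)⟩

section main
variable {g : Euc n → ℝ} {δ ε : ℝ} (hg : ContDiff ℝ 1 g) (hcg : HasCompactSupport g)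
  (hε : 0 < ε) (hz : ∀ y : Euc n, ‖y‖ < ε → y ∉ tsupport g)

include hg hε hz in
lemma hasLineDerivAt_V (j : Fin n) (x : Euc n) :
    HasLineDerivAt ℝ (fun y : Euc n => g y * (y j * ‖y‖ ^ (-δ))) (Vd g δ j x) x (sgl j) := by
  by_cases hx : ‖x‖ < ε
  · have hev : (fun y : Euc n => g y * (y j * ‖y‖ ^ (-δ))) =ᶠ[nhds x] (fun _ => 0) := by
      filter_upwards [Metric.isOpen_ball.mem_nhds (show x ∈ Metric.ball (0:Euc n) ε by
        simpa [mem_ball_zero_iff] using hx)] with y hy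
      rw [image_eq_zero_of_notMem_tsupport (hz y (mem_ball_zero_iff.1 hy)), zero_mul]
    have h1 : HasFDerivAt (fun y : Euc n => g y * (y j * ‖y‖ ^ (-δ)))
        (0 : Euc n →L[ℝ] ℝ) x := (hasFDerivAt_const (0:ℝ) x).congr_of_eventuallyEq hev
    have h2 := h1.hasLineDerivAt (sgl j)
    have hVd : Vd g δ j x = 0 := by
      simp [Vd, image_eq_zero_of_notMem_tsupport (hz x hx), fderiv_zero_of_nmem (hz x hx)]
    rw [hVd]
    simpa using h2
  · have hx0 : x ≠ 0 := by
      intro h; rw [h] at hx; simp [hε] at hx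
    have hgx := (hg.differentiable one_ne_zero x).hasFDerivAt
    have hproj : HasFDerivAt (fun y : Euc n => y j)
        (EuclideanSpace.proj (𝕜 := ℝ) j : Euc n →L[ℝ] ℝ) x :=
      (EuclideanSpace.proj (𝕜 := ℝ) j).hasFDerivAt
    have hw := hasFDerivAt_w δ hx0
    have hV := hgx.mul (hproj.mul hw)
    have h2 := hV.hasLineDerivAt (sgl j)
    have hval : (g x • ((x j) • ((-δ * ‖x‖ ^ (-δ - 2)) • (innerSL ℝ x : Euc n →L[ℝ] ℝ)) +
        (‖x‖ ^ (-δ)) • (EuclideanSpace.proj (𝕜 := ℝ) j : Euc n →L[ℝ] ℝ)) +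
        (x j * ‖x‖ ^ (-δ)) • fderiv ℝ g x) (sgl j) = Vd g δ j x := by
      simp [Vd, ContinuousLinearMap.add_apply, ContinuousLinearMap.smul_apply,
        EuclideanSpace.inner_single_right, PiLp.proj_apply,
        EuclideanSpace.single_apply, innerSL_apply_apply]
      ring
    rw [← hval]
    exact h2

include hg hcg hε hz in
lemma integrable_Vd (j : Fin n) : Integrable (Vd g δ j) := by
  apply Continuous.integrable_of_hasCompactSupport
  · apply cont_of_locally_zero _ ε hε
    · intro y hy
      simp [Vd, image_eq_zero_of_notMem_tsupport (hz y hy), fderiv_zero_of_nmem (hz y hy)]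
    · intro x hx
      have hn0 : ‖x‖ ≠ 0 := norm_ne_zero_iff.2 hx
      have hfc : Continuous (fun y : Euc n => fderiv ℝ g y (sgl j)) :=
        (hg.continuous_fderiv one_ne_zero).clm_apply continuous_const
      have hpc : Continuous (fun y : Euc n => y j) :=
        (EuclideanSpace.proj (𝕜 := ℝ) j).continuous
      have hw1 : ContinuousAt (fun y : Euc n => ‖y‖ ^ (-δ)) x :=
        continuous_norm.continuousAt.rpow_const (Or.inl hn0)
      have hw2 : ContinuousAt (fun y : Euc n => ‖y‖ ^ (-δ - 2)) x :=
        continuous_norm.continuousAt.rpow_const (Or.inl hn0)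
      exact ((hfc.continuousAt.mul (hpc.continuousAt.mul hw1)).add
        (hg.continuous.continuousAt.mul (hw1.add (hpc.continuousAt.mul
          ((continuousAt_const.mul hw2).mul hpc.continuousAt)))))
  · apply HasCompactSupport.intro hcg
    intro x hx
    simp [Vd, image_eq_zero_of_notMem_tsupport hx, fderiv_zero_of_nmem hx]

include hg hcg hε hz in
lemma integrable_V (j : Fin n) :
    Integrable (fun x : Euc n => g x * (x j * ‖x‖ ^ (-δ))) := by
  apply Continuous.integrable_of_hasCompactSupport
  · apply cont_of_locally_zero _ ε hε
    · intro y hy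
      simp [image_eq_zero_of_notMem_tsupport (hz y hy)]
    · intro x hx
      have hn0 : ‖x‖ ≠ 0 := norm_ne_zero_iff.2 hx
      exact hg.continuous.continuousAt.mul
        (((EuclideanSpace.proj (𝕜 := ℝ) j).continuous.continuousAt).mul
          (continuous_norm.continuousAt.rpow_const (Or.inl hn0)))
  · apply HasCompactSupport.intro hcg
    intro x hx
    simp [image_eq_zero_of_notMem_tsupport hx]

include hg hcg hε hz in
lemma integral_Vd_zero (j : Fin n) : ∫ x : Euc n, Vd g δ j x = 0 := by
  have key := integral_bilinear_hasLineDerivAt_right_eq_neg_left_of_integrable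
    (μ := (volume : Measure (Euc n))) (B := ContinuousLinearMap.mul ℝ ℝ)
    (f := fun _ : Euc n => (1:ℝ)) (f' := fun _ : Euc n => (0:ℝ))
    (g := fun y : Euc n => g y * (y j * ‖y‖ ^ (-δ))) (g' := Vd g δ j) (v := sgl j)
    (by simp only [ContinuousLinearMap.mul_apply'] ; simpa using (integrable_zero (Euc n) ℝ volume))
    (by simpa using integrable_Vd hg hcg hε hz j)
    (by simpa using integrable_V hg hcg hε hz j)
    (fun x _ => by simpa using (hasFDerivAt_const (1:ℝ) x).hasLineDerivAt (sgl j))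
    (fun x _ => hasLineDerivAt_V hg hε hz j x)
  simpa using key

end main

end TopShiftAux

namespace TopShiftAux

variable {n : ℕ}

lemma norm_sq_eq_sum (x : Euc n) : ‖x‖ ^ 2 = ∑ j, x j * x j := by
  rw [EuclideanSpace.norm_eq, Real.sq_sqrt (by positivity)]
  exact Finset.sum_congr rfl fun j _ => by rw [Real.norm_eq_abs, sq_abs, sq]

lemma rpow_shift {x : Euc n} (hx : x ≠ 0) (δ : ℝ) :
    ‖x‖ ^ (-δ - 2) * ‖x‖ ^ 2 = ‖x‖ ^ (-δ) := by
  rw [← Real.rpow_natCast ‖x‖ 2, ← Real.rpow_add (norm_pos_iff.2 hx)]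
  congr 1
  push_cast
  ring

lemma fderiv_apply_self (g : Euc n → ℝ) (x : Euc n) :
    fderiv ℝ g x x = ∑ j, x j * fderiv ℝ g x (EuclideanSpace.single j (1:ℝ)) := by
  have hx : ∑ j, x j • (EuclideanSpace.single j (1:ℝ) : Euc n) = x := by
    simpa [EuclideanSpace.basisFun_apply, EuclideanSpace.basisFun_repr] using
      (EuclideanSpace.basisFun (Fin n) ℝ).sum_repr x
  calc fderiv ℝ g x x
      = fderiv ℝ g x (∑ j, x j • (EuclideanSpace.single j (1:ℝ) : Euc n)) :=
        congrArg _ hx.symm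
    _ = ∑ j, x j * fderiv ℝ g x (EuclideanSpace.single j (1:ℝ)) := by
        rw [map_sum]; simp

lemma sum_Vd (g : Euc n → ℝ) (δ : ℝ) {ε : ℝ} (hε : 0 < ε)
    (hz : ∀ y : Euc n, ‖y‖ < ε → y ∉ tsupport g) (x : Euc n) :
    ∑ j, Vd g δ j x
      = fderiv ℝ g x x * ‖x‖ ^ (-δ) + ((n : ℝ) - δ) * (g x * ‖x‖ ^ (-δ)) := by
  by_cases hx : x = 0
  · subst hx
    have h0 : (0 : Euc n) ∉ tsupport g := hz 0 (by simpa using hε)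
    simp [Vd, image_eq_zero_of_notMem_tsupport h0, fderiv_zero_of_nmem h0]
  · have e1 : ∑ j, fderiv ℝ g x (EuclideanSpace.single j (1:ℝ)) * (x j * ‖x‖ ^ (-δ))
        = fderiv ℝ g x x * ‖x‖ ^ (-δ) := by
      rw [fderiv_apply_self, Finset.sum_mul]
      exact Finset.sum_congr rfl fun j _ => by ring
    have e2 : ∑ j, g x * (‖x‖ ^ (-δ) + x j * (-δ * ‖x‖ ^ (-δ - 2) * x j))
        = g x * ((n : ℝ) * ‖x‖ ^ (-δ) - δ * ‖x‖ ^ (-δ)) := by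
      rw [← Finset.mul_sum]
      congr 1
      rw [Finset.sum_add_distrib, Finset.sum_const, Finset.card_univ, Fintype.card_fin]
      have h1 : ∑ j, x j * (-δ * ‖x‖ ^ (-δ - 2) * x j)
          = -δ * (‖x‖ ^ (-δ - 2) * ‖x‖ ^ 2) := by
        rw [norm_sq_eq_sum, Finset.mul_sum, Finset.mul_sum]
        exact Finset.sum_congr rfl fun j _ => by ring
      rw [h1, rpow_shift hx δ, nsmul_eq_mul]
      ring
    simp only [Vd]
    rw [Finset.sum_add_distrib, e1, e2]
    ring

section main2
variable {g : Euc n → ℝ} (hg : ContDiff ℝ 1 g) (hcg : HasCompactSupport g)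
  (h0 : (0 : Euc n) ∉ tsupport g)

include hg hcg h0 in
lemma integrable_fderiv_weight (δ : ℝ) :
    Integrable (fun x : Euc n => fderiv ℝ g x x * ‖x‖ ^ (-δ)) := by
  rcases exists_eps h0 with ⟨ε, hε, hz⟩
  apply Continuous.integrable_of_hasCompactSupport
  · apply cont_of_locally_zero _ ε hε
    · intro y hy
      simp [fderiv_zero_of_nmem (hz y hy)]
    · intro x hx
      exact (((hg.continuous_fderiv one_ne_zero).clm_apply continuous_id).continuousAt).mul
        (continuous_norm.continuousAt.rpow_const (Or.inl (norm_ne_zero_iff.2 hx)))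
  · apply HasCompactSupport.intro hcg
    intro x hx
    simp [fderiv_zero_of_nmem hx]

include hg hcg h0 in
lemma integrable_weight (δ : ℝ) :
    Integrable (fun x : Euc n => g x * ‖x‖ ^ (-δ)) := by
  rcases exists_eps h0 with ⟨ε, hε, hz⟩
  apply Continuous.integrable_of_hasCompactSupport
  · apply cont_of_locally_zero _ ε hε
    · intro y hy
      simp [image_eq_zero_of_notMem_tsupport (hz y hy)]
    · intro x hx
      exact hg.continuous.continuousAt.mul
        (continuous_norm.continuousAt.rpow_const (Or.inl (norm_ne_zero_iff.2 hx)))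
  · apply HasCompactSupport.intro hcg
    intro x hx
    simp [image_eq_zero_of_notMem_tsupport hx]

include hg hcg h0 in
lemma key_ibp (δ : ℝ) :
    ∫ x : Euc n, fderiv ℝ g x x * ‖x‖ ^ (-δ)
      = -((n : ℝ) - δ) * ∫ x : Euc n, g x * ‖x‖ ^ (-δ) := by
  rcases exists_eps h0 with ⟨ε, hε, hz⟩
  have hzero : ∫ x : Euc n, (∑ j, Vd g δ j x) = 0 := by
    rw [integral_finset_sum _ (fun j _ => integrable_Vd hg hcg hε hz j)]
    simp [integral_Vd_zero hg hcg hε hz]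
  have hcongr : ∫ x : Euc n, (∑ j, Vd g δ j x)
      = ∫ x : Euc n, (fderiv ℝ g x x * ‖x‖ ^ (-δ)
          + ((n : ℝ) - δ) * (g x * ‖x‖ ^ (-δ))) := by
    exact integral_congr_ae (Filter.Eventually.of_forall (sum_Vd g δ hε hz))
  rw [hcongr, integral_add (integrable_fderiv_weight hg hcg h0 δ)
    ((integrable_weight hg hcg h0 δ).const_mul _), integral_const_mul] at hzero
  linarith

end main2

end TopShiftAux

namespace TopShiftAux

variable {n : ℕ}

lemma integrable_weight' (h : Euc n → ℝ) {ε : ℝ} (hε : 0 < ε)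
    (hz : ∀ y : Euc n, ‖y‖ < ε → h y = 0)
    (hcont : ∀ x : Euc n, x ≠ 0 → ContinuousAt h x)
    (K : Set (Euc n)) (hK : IsCompact K) (hs : ∀ x ∉ K, h x = 0) (δ : ℝ) :
    Integrable (fun x : Euc n => h x * ‖x‖ ^ (-δ)) := by
  apply Continuous.integrable_of_hasCompactSupport
  · apply cont_of_locally_zero _ ε hε
    · intro y hy; rw [hz y hy, zero_mul]
    · intro x hx
      exact (hcont x hx).mul
        (continuous_norm.continuousAt.rpow_const (Or.inl (norm_ne_zero_iff.2 hx)))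
  · apply HasCompactSupport.intro hK
    intro x hx; rw [hs x hx, zero_mul]

end TopShiftAux


open TopShiftAux in
theorem Top_shift_identity (n : ℕ) (hn : 1 ≤ n) (α β : ℝ) (f : Euc n → ℝ)
    (hf : ContDiff ℝ 1 f) (hc : HasCompactSupport f) (h0 : (0 : Euc n) ∉ tsupport f) :
    wnorm2 n α (Tw n β f)
      = wnorm2 n α (Tw n α f) + ((β - α) ^ 2 / 4) * wnorm2 n (α + 2) f := by
  classical
  set G : Euc n → ℝ := fun y => f y * f y with hGdef
  have hfd : Differentiable ℝ f := hf.differentiable one_ne_zero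
  have hG : ContDiff ℝ 1 G := hf.mul hf
  have hcG : HasCompactSupport G := HasCompactSupport.intro hc
    (fun x hx => by simp [hGdef, image_eq_zero_of_notMem_tsupport hx])
  have h0G : (0 : Euc n) ∉ tsupport G := fun h =>
    h0 (closure_mono (Function.support_mul_subset_left f f) h)
  obtain ⟨ε, hε, hz⟩ := exists_eps h0
  -- gradient facts
  have hgradc : Continuous fun y : Euc n => gradient f y := by
    unfold gradient
    exact (InnerProductSpace.toDual ℝ (Euc n)).symm.continuous.comp
      (hf.continuous_fderiv one_ne_zero)
  have hinner : ∀ x : Euc n, (inner ℝ x (gradient f x) : ℝ) = fderiv ℝ f x x := by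
    intro x
    have h1 : gradient f x = (InnerProductSpace.toDual ℝ (Euc n)).symm (fderiv ℝ f x) := rfl
    rw [real_inner_comm, h1, InnerProductSpace.toDual_symm_apply]
  have hTw0 : ∀ γ : ℝ, ∀ y : Euc n, y ∉ tsupport f → Tw n γ f y = 0 := by
    intro γ y hy
    have hev : f =ᶠ[nhds y] (fun _ => 0) := by
      filter_upwards [(isClosed_tsupport f).isOpen_compl.mem_nhds hy] with z hz₂ using
        image_eq_zero_of_notMem_tsupport hz₂
    have hgrad0 : gradient f y = 0 := by rw [hev.gradient_eq]; exact gradient_const _ _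
    simp [Tw, rDeriv, hgrad0, image_eq_zero_of_notMem_tsupport hy]
  have hTwCont : ∀ γ : ℝ, ∀ x : Euc n, x ≠ 0 → ContinuousAt (Tw n γ f) x := by
    intro γ x hx
    have hn0 : ‖x‖ ≠ 0 := norm_ne_zero_iff.2 hx
    have h1 : ContinuousAt (fun y : Euc n => (inner ℝ y (gradient f y) : ℝ) / ‖y‖) x :=
      ((continuous_id.inner hgradc).continuousAt).div continuous_norm.continuousAt hn0
    have h2 : ContinuousAt (fun y : Euc n =>
        (((n : ℝ) - 2 - γ) / (2 * ‖y‖)) * f y) x := by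
      refine ContinuousAt.mul (ContinuousAt.div continuousAt_const
        ((continuous_const.mul continuous_norm).continuousAt) ?_)
        hf.continuous.continuousAt
      simpa using hn0
    exact h1.add h2
  -- the pointwise identity
  have hpoint : ∀ x : Euc n,
      (Tw n β f x) ^ 2 * ‖x‖ ^ (-α)
        = (Tw n α f x) ^ 2 * ‖x‖ ^ (-α)
          + (((α - β) / 2) * (fderiv ℝ G x x * ‖x‖ ^ (-(α + 2)))
            + ((α - β) * ((n : ℝ) - 2 - α) / 2 + (α - β) ^ 2 / 4)
              * (G x * ‖x‖ ^ (-(α + 2)))) := by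
    intro x
    by_cases hx : x = 0
    · subst hx
      have hf0 : f 0 = 0 := image_eq_zero_of_notMem_tsupport h0
      simp [Tw, rDeriv, hGdef, hf0]
    · have hr : (0:ℝ) < ‖x‖ := norm_pos_iff.2 hx
      have hD : rDeriv n f x = fderiv ℝ f x x / ‖x‖ := by
        rw [rDeriv, hinner x]
      have hG' : fderiv ℝ G x x = 2 * (f x * fderiv ℝ f x x) := by
        rw [hGdef]
        rw [fderiv_fun_mul (hfd x) (hfd x)]
        simp
        ring
      have hw2 : ‖x‖ ^ (-(α + 2)) = ‖x‖ ^ (-α) / (‖x‖ * ‖x‖) := by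
        rw [show -(α + 2) = -α + (-2:ℝ) by ring, Real.rpow_add hr]
        congr 1
        rw [show (-2:ℝ) = -((2:ℕ):ℝ) by norm_num, Real.rpow_neg hr.le,
          Real.rpow_natCast, pow_two]
      simp only [Tw, hD, hG', hw2]
      field_simp
      ring
  -- integrability
  have intA : Integrable (fun x : Euc n => (Tw n α f x) ^ 2 * ‖x‖ ^ (-α)) := by
    apply integrable_weight' _ hε _ _ (tsupport f) hc
    · intro x hx; rw [hTw0 α x hx]; ring
    · intro y hy; rw [hTw0 α y (hz y hy)]; ring
    · intro x hx; exact (hTwCont α x hx).pow 2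
  have intB : Integrable (fun x : Euc n => fderiv ℝ G x x * ‖x‖ ^ (-(α + 2))) :=
    integrable_fderiv_weight hG hcG h0G (α + 2)
  have intC : Integrable (fun x : Euc n => G x * ‖x‖ ^ (-(α + 2))) :=
    integrable_weight hG hcG h0G (α + 2)
  have hCw : wnorm2 n (α + 2) f = ∫ x : Euc n, G x * ‖x‖ ^ (-(α + 2)) := by
    unfold wnorm2
    exact integral_congr_ae (Filter.Eventually.of_forall fun x => by
      show f x ^ 2 * _ = (f x * f x) * _
      rw [pow_two])
  have step : wnorm2 n α (Tw n β f)
      = (∫ x : Euc n, (Tw n α f x) ^ 2 * ‖x‖ ^ (-α))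
        + (((α - β) / 2) * ∫ x : Euc n, fderiv ℝ G x x * ‖x‖ ^ (-(α + 2)))
        + (((α - β) * ((n : ℝ) - 2 - α) / 2 + (α - β) ^ 2 / 4)
            * ∫ x : Euc n, G x * ‖x‖ ^ (-(α + 2))) := by
    have intB1 : Integrable (fun x : Euc n =>
        ((α - β) / 2) * (fderiv ℝ G x x * ‖x‖ ^ (-(α + 2)))) := intB.const_mul _
    have intC1 : Integrable (fun x : Euc n =>
        ((α - β) * ((n : ℝ) - 2 - α) / 2 + (α - β) ^ 2 / 4)
          * (G x * ‖x‖ ^ (-(α + 2)))) := intC.const_mul _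
    have intBC : Integrable (fun x : Euc n =>
        ((α - β) / 2) * (fderiv ℝ G x x * ‖x‖ ^ (-(α + 2)))
          + ((α - β) * ((n : ℝ) - 2 - α) / 2 + (α - β) ^ 2 / 4)
            * (G x * ‖x‖ ^ (-(α + 2)))) := intB1.add intC1
    unfold wnorm2
    rw [integral_congr_ae (Filter.Eventually.of_forall hpoint),
      integral_add intA intBC, integral_add intB1 intC1,
      integral_const_mul, integral_const_mul]
    ring
  have hwα : wnorm2 n α (Tw n α f) = ∫ x : Euc n, (Tw n α f x) ^ 2 * ‖x‖ ^ (-α) := rfl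
  rw [step, key_ibp hG hcG h0G (α + 2), hwα, hCw]
  ring
end

section
/- For n ≥ 1, α ∈ ℝ and u ∈ C²_c(ℝⁿ \ {0}), one has ‖Δ_r u‖_α² = ((n+α)²/4)‖∂_r u‖_{α+2}² + ‖T_α(∂_r u)‖_α², where Δ_r = ∂_r² + ((n−1)/r)∂_r is the radial Laplacian. In particular ‖Δ_r u‖_α² ≥ ((n+α)²/4)‖∂_r u‖_{α+2}². -/
open MeasureTheory Real RealInnerProductSpace

/-! ### Auxiliary lemmas -/

lemma rDeriv_eq (n : ℕ) (f : Euc n → ℝ) (x : Euc n) :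
    rDeriv n f x = fderiv ℝ f x x / ‖x‖ := by
  unfold rDeriv gradient
  rw [real_inner_comm, InnerProductSpace.toDual_symm_apply]

/-- integral of a directional derivative of a compactly supported `C¹` function vanishes -/
lemma key_div {n : ℕ} (w : Euc n → ℝ) (hw : ContDiff ℝ 1 w)
    (hcw : HasCompactSupport w) (v : Euc n) :
    ∫ x : Euc n, fderiv ℝ w x v = 0 := by
  obtain ⟨C, hC⟩ := hw.lipschitzWith_of_hasCompactSupport hcw one_ne_zero
  have h1 : LipschitzWith 0 (fun _ : Euc n => (1:ℝ)) := LipschitzWith.const _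
  have h2 := LipschitzWith.integral_lineDeriv_mul_eq (μ := volume) h1 hC hcw (-v)
  have h3 : ∀ x : Euc n, lineDeriv ℝ (fun _ : Euc n => (1:ℝ)) x (-v) = 0 := by
    intro x
    simpa using (differentiableAt_const (1:ℝ)).lineDeriv_eq_fderiv (x := x) (v := -v)
  have h4 : ∀ x : Euc n, lineDeriv ℝ w x (- -v) * 1 = fderiv ℝ w x v := by
    intro x
    simp [(hw.differentiable one_ne_zero x).lineDeriv_eq_fderiv]
  simp only [h3, zero_mul, integral_zero] at h2
  rw [← integral_congr_ae (Filter.Eventually.of_forall h4)] at *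
  exact h2.symm

lemma contDiff_of_aux {n : ℕ} {K : Set (Euc n)} (hK : IsClosed K) (h0K : (0 : Euc n) ∉ K)
    {f : Euc n → ℝ}
    (hf : ∀ x : Euc n, x ≠ 0 → ContDiffAt ℝ 1 f x) (hoff : ∀ x ∉ K, f x = 0) :
    ContDiff ℝ 1 f := by
  rw [contDiff_iff_contDiffAt]
  intro x
  by_cases hxK : x ∈ K
  · exact hf x (fun h => h0K (h ▸ hxK))
  · have hev : f =ᶠ[nhds x] fun _ => 0 :=
      Filter.eventually_of_mem (hK.isOpen_compl.mem_nhds hxK) (fun y hy => hoff y hy)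
    exact (contDiffAt_const (c := (0:ℝ))).congr_of_eventuallyEq hev

lemma cont_of_aux {n : ℕ} {K : Set (Euc n)} (hK : IsClosed K) (h0K : (0 : Euc n) ∉ K)
    {f : Euc n → ℝ}
    (hf : ContinuousOn f {x : Euc n | x ≠ 0}) (hoff : ∀ x ∉ K, f x = 0) :
    Continuous f := by
  rw [continuous_iff_continuousAt]
  intro x
  by_cases hxK : x ∈ K
  · have hx : x ≠ 0 := fun h => h0K (h ▸ hxK)
    exact hf.continuousAt (isOpen_compl_singleton.mem_nhds hx)
  · have hev : f =ᶠ[nhds x] fun _ => 0 :=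
      Filter.eventually_of_mem (hK.isOpen_compl.mem_nhds hxK) (fun y hy => hoff y hy)
    exact ContinuousAt.congr continuousAt_const hev.symm

lemma v_off {n : ℕ} {u : Euc n → ℝ} (x : Euc n) (hx : x ∉ tsupport u) : rDeriv n u x = 0 := by
  have hz : fderiv ℝ u x = 0 := by
    by_contra h
    exact hx (support_fderiv_subset ℝ (by simpa [Function.mem_support] using h))
  rw [rDeriv_eq, hz]
  simp

lemma v_contDiff {n : ℕ} {u : Euc n → ℝ} (hu : ContDiff ℝ 2 u) (h0 : (0 : Euc n) ∉ tsupport u) :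
    ContDiff ℝ 1 (rDeriv n u) := by
  have hveq : rDeriv n u = fun y => fderiv ℝ u y y / ‖y‖ := funext (rDeriv_eq n u)
  rw [hveq]
  apply contDiff_of_aux (isClosed_tsupport u) h0
  · intro x hx
    have hnum : ContDiffAt ℝ 1 (fun y : Euc n => fderiv ℝ u y y) x := by
      exact ((hu.fderiv_right (m := 1) (by norm_num)).clm_apply contDiff_id).contDiffAt
    have hden : ContDiffAt ℝ 1 (fun y : Euc n => ‖y‖) x := contDiffAt_norm ℝ hx
    exact hnum.div hden (norm_ne_zero_iff.mpr hx)
  · intro x hx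
    rw [← rDeriv_eq]
    exact v_off x hx

lemma single_sum {n : ℕ} (x : Euc n) :
    ∑ j : Fin n, x j • EuclideanSpace.single j (1:ℝ) = x := by
  ext i
  have h : (∑ j : Fin n, x j • EuclideanSpace.single j (1:ℝ)) i
      = ∑ j : Fin n, (x j • EuclideanSpace.single j (1:ℝ)) i :=
    by rw [WithLp.ofLp_sum, Finset.sum_apply]
  rw [h]
  simp [EuclideanSpace.single_apply]

/-- pointwise divergence identity: `div (v² r^{-(α+2)} x) = 2 T_α(v) v r^{-(α+1)}` at `x ≠ 0` -/
lemma hdiv_calc {n : ℕ} (α : ℝ) (v : Euc n → ℝ) (hv : ContDiff ℝ 1 v)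
    (x : Euc n) (hx : x ≠ 0) :
    (∑ j : Fin n, fderiv ℝ (fun y => (v y * v y * ‖y‖ ^ (-(α + 2))) * y j) x
        (EuclideanSpace.single j (1:ℝ)))
      = 2 * (Tw n α v x * v x * ‖x‖ ^ (-(α + 1))) := by
  have hr : (0:ℝ) < ‖x‖ := norm_pos_iff.mpr hx
  set c : ℝ := -(α+2)/2 with hcdef
  have hsqpos : (0:ℝ) < ‖x‖^2 := by positivity
  have hsq : HasFDerivAt (fun y : Euc n => ‖y‖^2) (2 • (innerSL ℝ x)) x := by
    simpa using (hasFDerivAt_id x).norm_sq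
  have hrpow : HasDerivAt (fun t : ℝ => t ^ c) (c * (‖x‖^2) ^ (c-1)) (‖x‖^2) :=
    Real.hasDerivAt_rpow_const (Or.inl hsqpos.ne')
  have hcomp0 := hrpow.comp_hasFDerivAt x hsq
  have hcomp : HasFDerivAt (fun y : Euc n => (‖y‖^2 : ℝ) ^ c)
      ((c * (‖x‖^2)^(c-1)) • (2 • (innerSL ℝ x))) x := hcomp0
  have hfun : (fun y : Euc n => (‖y‖^2 : ℝ) ^ c) = fun y : Euc n => ‖y‖ ^ (-(α+2)) := by
    funext y
    rw [← Real.rpow_natCast ‖y‖ 2, ← Real.rpow_mul (norm_nonneg y)]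
    congr 1
    push_cast
    rw [hcdef]; ring
  rw [hfun] at hcomp
  set Φ : Euc n →L[ℝ] ℝ := (c * (‖x‖^2)^(c-1)) • (2 • (innerSL ℝ x)) with hΦdef
  have hc2 : ((‖x‖^2 : ℝ)) ^ c = ‖x‖ ^ (-(α+2)) := congrFun hfun x
  have hΦx : Φ x = -(α+2) * ‖x‖ ^ (-(α+2)) := by
    have h1 : Φ x = c * (‖x‖^2)^(c-1) * (2 * (‖x‖^2)) := by
      have h0 : Φ x = c * (‖x‖^2)^(c-1) * (2 * (inner ℝ x x : ℝ)) := by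
        simp only [hΦdef, ContinuousLinearMap.smul_apply,
          innerSL_apply_apply, smul_eq_mul, nsmul_eq_mul, Nat.cast_ofNat]
      rw [h0, real_inner_self_eq_norm_sq]
    rw [h1, Real.rpow_sub hsqpos, Real.rpow_one, hc2]
    field_simp
    rw [hcdef]; ring
  set Dv : Euc n →L[ℝ] ℝ := fderiv ℝ v x with hDvdef
  have hvd : HasFDerivAt v Dv x := (hv.differentiable one_ne_zero x).hasFDerivAt
  have hgd : HasFDerivAt (fun y => v y * v y * ‖y‖ ^ (-(α+2)))
      ((v x * v x) • Φ + (‖x‖ ^ (-(α+2))) • (v x • Dv + v x • Dv)) x :=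
    (hvd.mul hvd).mul hcomp
  set G : Euc n →L[ℝ] ℝ := (v x * v x) • Φ + (‖x‖ ^ (-(α+2))) • (v x • Dv + v x • Dv)
    with hGdef
  have hproj : ∀ j : Fin n, HasFDerivAt (fun y : Euc n => y j)
      (EuclideanSpace.proj j : Euc n →L[ℝ] ℝ) x := fun j =>
    (EuclideanSpace.proj j : Euc n →L[ℝ] ℝ).hasFDerivAt
  have hfd : ∀ j : Fin n, fderiv ℝ (fun y => (v y * v y * ‖y‖ ^ (-(α + 2))) * y j) x
      = (v x * v x * ‖x‖ ^ (-(α+2))) • (EuclideanSpace.proj j : Euc n →L[ℝ] ℝ)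
        + (x j) • G := fun j => (hgd.mul (hproj j)).fderiv
  have hDvx : Dv x = rDeriv n v x * ‖x‖ := by
    rw [rDeriv_eq, hDvdef]
    field_simp
  have hsum : (∑ j : Fin n, fderiv ℝ (fun y => (v y * v y * ‖y‖ ^ (-(α + 2))) * y j) x
      (EuclideanSpace.single j (1:ℝ)))
      = n * (v x * v x * ‖x‖ ^ (-(α+2))) + G x := by
    have hterm : ∀ j : Fin n,
        fderiv ℝ (fun y => (v y * v y * ‖y‖ ^ (-(α + 2))) * y j) x
          (EuclideanSpace.single j (1:ℝ))
        = (v x * v x * ‖x‖ ^ (-(α+2))) + G (x j • EuclideanSpace.single j (1:ℝ)) := by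
      intro j
      rw [hfd j]
      simp [EuclideanSpace.single_apply, _root_.map_smul]
    rw [Finset.sum_congr rfl (fun j _ => hterm j), Finset.sum_add_distrib]
    rw [← map_sum G _ Finset.univ, single_sum]
    simp [mul_comm]
  rw [hsum]
  have hGx : G x = v x * v x * (-(α+2) * ‖x‖ ^ (-(α+2)))
      + ‖x‖ ^ (-(α+2)) * (2 * (v x * (rDeriv n v x * ‖x‖))) := by
    rw [hGdef]
    simp [hΦx, hDvx]
    ring
  rw [hGx]
  have e3 : ‖x‖ ^ (-(α+1)) = ‖x‖ * ‖x‖ ^ (-(α+2)) := by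
    rw [show -(α+1) = 1 + -(α+2) by ring, Real.rpow_add hr, Real.rpow_one]
  rw [e3]
  unfold Tw
  field_simp
  ring

theorem radial_laplacian_identity (n : ℕ) (hn : 1 ≤ n) (α : ℝ) (u : Euc n → ℝ)
    (hu : ContDiff ℝ 2 u) (hc : HasCompactSupport u) (h0 : (0 : Euc n) ∉ tsupport u) :
    wnorm2 n α (lapr n u)
        = (((n : ℝ) + α) ^ 2 / 4) * wnorm2 n (α + 2) (rDeriv n u)
          + wnorm2 n α (Tw n α (rDeriv n u)) ∧
    wnorm2 n α (lapr n u) ≥ (((n : ℝ) + α) ^ 2 / 4) * wnorm2 n (α + 2) (rDeriv n u) := by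
  have hKcl : IsClosed (tsupport u) := isClosed_tsupport u
  set K := tsupport u with hKdef
  have hKc : IsCompact K := hc
  set v : Euc n → ℝ := rDeriv n u with hvdef
  have hv : ContDiff ℝ 1 v := v_contDiff hu h0
  have hvoff : ∀ x ∉ K, v x = 0 := fun x hx => v_off x hx
  have htsv : tsupport v ⊆ K :=
    closure_minimal (fun x hx => by by_contra h; exact hx (hvoff x h)) hKcl
  have hrvoff : ∀ x ∉ K, rDeriv n v x = 0 := by
    intro x hx
    have hfz : fderiv ℝ v x = 0 := by
      by_contra h
      exact hx (htsv (support_fderiv_subset ℝ (by simpa [Function.mem_support] using h)))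
    rw [rDeriv_eq, hfz]
    simp
  have hTwoff : ∀ x ∉ K, Tw n α v x = 0 := by
    intro x hx; unfold Tw; rw [hrvoff x hx, hvoff x hx]; ring
  have hlaproff : ∀ x ∉ K, lapr n u x = 0 := by
    intro x hx; unfold lapr; rw [← hvdef, hrvoff x hx, hvoff x hx]; ring
  -- continuity facts
  have hfv : Continuous (fderiv ℝ v) := hv.continuous_fderiv one_ne_zero
  have hrvcont : ContinuousOn (rDeriv n v) {x : Euc n | x ≠ 0} := by
    have hh : rDeriv n v = fun y => fderiv ℝ v y y / ‖y‖ := funext (rDeriv_eq n v)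
    rw [hh]
    exact ((hfv.clm_apply continuous_id).continuousOn).div continuous_norm.continuousOn
      (fun x hx => norm_ne_zero_iff.mpr hx)
  have hTwcont : ContinuousOn (Tw n α v) {x : Euc n | x ≠ 0} := by
    have hh : Tw n α v = fun x => rDeriv n v x + (((n : ℝ) - 2 - α) / (2 * ‖x‖)) * v x := rfl
    rw [hh]
    refine hrvcont.add (ContinuousOn.mul (ContinuousOn.div continuousOn_const
      (continuous_norm.const_smul (2:ℝ)).continuousOn ?_) (hv.continuous.continuousOn))
    intro x hx
    exact mul_ne_zero two_ne_zero (norm_ne_zero_iff.mpr hx)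
  have hrpowcont : ∀ β : ℝ, ContinuousOn (fun x : Euc n => ‖x‖ ^ (-β)) {x : Euc n | x ≠ 0} := by
    intro β
    exact ContinuousOn.rpow_const continuous_norm.continuousOn
      (fun x hx => Or.inl (norm_ne_zero_iff.mpr hx))
  -- integrands
  set A1 : Euc n → ℝ := fun x => (Tw n α v x) ^ 2 * ‖x‖ ^ (-α) with hA1def
  set A2 : Euc n → ℝ := fun x => (v x) ^ 2 * ‖x‖ ^ (-(α + 2)) with hA2def
  have hA1off : ∀ x ∉ K, A1 x = 0 := by intro x hx; simp [hA1def, hTwoff x hx]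
  have hA2off : ∀ x ∉ K, A2 x = 0 := by intro x hx; simp [hA2def, hvoff x hx]
  have hA1int : Integrable A1 := by
    refine Continuous.integrable_of_hasCompactSupport ?_ (HasCompactSupport.intro hKc hA1off)
    exact cont_of_aux hKcl h0 (((hTwcont.pow 2).mul (hrpowcont α))) hA1off
  have hA2int : Integrable A2 := by
    refine Continuous.integrable_of_hasCompactSupport ?_ (HasCompactSupport.intro hKc hA2off)
    exact cont_of_aux hKcl h0 ((((hv.continuous.continuousOn).pow 2).mul (hrpowcont (α+2)))) hA2off
  -- the divergence trick
  set g : Euc n → ℝ := fun y => v y * v y * ‖y‖ ^ (-(α + 2)) with hgdef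
  have hgoff : ∀ x ∉ K, g x = 0 := by intro x hx; simp [hgdef, hvoff x hx]
  have hgC : ContDiff ℝ 1 g := by
    refine contDiff_of_aux hKcl h0 (fun x hx => ?_) hgoff
    exact (hv.contDiffAt.mul hv.contDiffAt).mul
      ((contDiffAt_norm ℝ hx).rpow_const_of_ne (norm_ne_zero_iff.mpr hx))
  have hgsupp : HasCompactSupport g := HasCompactSupport.intro hKc hgoff
  set e : Fin n → Euc n := fun j => EuclideanSpace.single j (1:ℝ) with hedef
  set w : Fin n → Euc n → ℝ := fun j y => g y * y j with hwdef
  have hwC : ∀ j, ContDiff ℝ 1 (w j) := by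
    intro j
    have hh : w j = fun y => g y * (EuclideanSpace.proj j) y := by
      funext y; simp [hwdef]
    rw [hh]
    exact hgC.mul (EuclideanSpace.proj j : Euc n →L[ℝ] ℝ).contDiff
  have hwsupp : ∀ j, HasCompactSupport (w j) := fun j => hgsupp.mul_right
  have hzero : ∀ j, ∫ x : Euc n, fderiv ℝ (w j) x (e j) = 0 :=
    fun j => key_div _ (hwC j) (hwsupp j) _
  have hSint : ∀ j, Integrable (fun x : Euc n => fderiv ℝ (w j) x (e j)) := by
    intro j
    refine Continuous.integrable_of_hasCompactSupport
      (((hwC j).continuous_fderiv one_ne_zero).clm_apply continuous_const) ?_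
    exact (hwsupp j).fderiv_apply ℝ (e j)
  have hSoff : ∀ x ∉ K, ∀ j, fderiv ℝ (w j) x (e j) = 0 := by
    intro x hx j
    have hev : w j =ᶠ[nhds x] fun _ => (0:ℝ) := by
      refine Filter.eventually_of_mem (hKcl.isOpen_compl.mem_nhds hx) (fun y hy => ?_)
      simp [hwdef, hgdef, hvoff y hy]
    rw [hev.fderiv_eq, fderiv_fun_const]
    simp
  -- pointwise divergence identity on K
  have hdiv : ∀ x ∈ K, (∑ j, fderiv ℝ (w j) x (e j))
      = 2 * (Tw n α v x * v x * ‖x‖ ^ (-(α + 1))) := by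
    intro x hxK
    exact hdiv_calc α v hv x (fun h => h0 (h ▸ hxK))
  -- pointwise main identity
  have hmain : ∀ x : Euc n, (lapr n u x) ^ 2 * ‖x‖ ^ (-α)
      = A1 x + (((n : ℝ) + α) ^ 2 / 4) * A2 x
        + (((n : ℝ) + α) / 2) * (∑ j, fderiv ℝ (w j) x (e j)) := by
    intro x
    by_cases hxK : x ∈ K
    · have hx : x ≠ 0 := fun h => h0 (h ▸ hxK)
      have hr : (0:ℝ) < ‖x‖ := norm_pos_iff.mpr hx
      have hne : ‖x‖ ≠ 0 := hr.ne'
      rw [hdiv x hxK]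
      have e1 : ‖x‖ ^ (-(α+1)) = ‖x‖ ^ (-α) / ‖x‖ := by
        rw [show -(α+1) = -α - 1 by ring, Real.rpow_sub hr, Real.rpow_one]
      have e2 : ‖x‖ ^ (-(α+2)) = ‖x‖ ^ (-α) / ‖x‖ ^ 2 := by
        rw [show -(α+2) = -α - ((2:ℕ):ℝ) by push_cast; ring, Real.rpow_sub hr,
          Real.rpow_natCast]
      have hlapr : lapr n u x = rDeriv n v x + (((n : ℝ) - 1) / ‖x‖) * v x := rfl
      have hTww : Tw n α v x = rDeriv n v x + (((n : ℝ) - 2 - α) / (2 * ‖x‖)) * v x := rfl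
      simp only [hA1def, hA2def]
      rw [hlapr, hTww, e1, e2]
      field_simp
      ring
    · rw [hlaproff x hxK, hA1off x hxK, hA2off x hxK]
      have hz : ∀ j, fderiv ℝ (w j) x (e j) = 0 := hSoff x hxK
      simp [hz]
  -- assemble
  have hint3 : Integrable (fun x : Euc n => (((n : ℝ) + α) / 2)
      * (∑ j, fderiv ℝ (w j) x (e j))) :=
    (integrable_finset_sum _ (fun j _ => hSint j)).const_mul _
  have hI : wnorm2 n α (lapr n u)
      = (∫ x : Euc n, A1 x) + (((n : ℝ) + α) ^ 2 / 4) * (∫ x : Euc n, A2 x) + 0 := by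
    calc wnorm2 n α (lapr n u)
        = ∫ x : Euc n, (A1 x + (((n : ℝ) + α) ^ 2 / 4) * A2 x
            + (((n : ℝ) + α) / 2) * (∑ j, fderiv ℝ (w j) x (e j))) := by
          exact integral_congr_ae (Filter.Eventually.of_forall hmain)
      _ = (∫ x : Euc n, (A1 x + (((n : ℝ) + α) ^ 2 / 4) * A2 x))
            + ∫ x : Euc n, (((n : ℝ) + α) / 2) * (∑ j, fderiv ℝ (w j) x (e j)) := by
          exact integral_add (hA1int.add (hA2int.const_mul _)) hint3
      _ = (∫ x : Euc n, A1 x) + (((n : ℝ) + α) ^ 2 / 4) * (∫ x : Euc n, A2 x) + 0 := by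
          rw [integral_add hA1int (hA2int.const_mul _), integral_const_mul, integral_const_mul,
            integral_finset_sum _ (fun j _ => hSint j)]
          simp [hzero]
  have hwA1 : wnorm2 n α (Tw n α (rDeriv n u)) = ∫ x : Euc n, A1 x := rfl
  have hwA2 : wnorm2 n (α + 2) (rDeriv n u) = ∫ x : Euc n, A2 x := rfl
  have hA1nn : 0 ≤ ∫ x : Euc n, A1 x := by
    refine integral_nonneg (fun x => ?_)
    have hh : (0:ℝ) ≤ ‖x‖ ^ (-α) := Real.rpow_nonneg (norm_nonneg x) _
    simp only [hA1def]
    positivity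
  constructor
  · rw [hI, hwA1, hwA2]; ring
  · rw [hI, hwA2]; linarith
end

section
/- Let n > 2m and −n < α < n − 4m. Then for all u ∈ C^{2m}_c(ℝⁿ \ {0}), ∫_{ℝⁿ} |Δ^m u|² |x|^{−α} dx ≥ (∏_{ℓ=0}^{m−1} A_{α+4ℓ}²) ∫_{ℝⁿ} u² |x|^{−α−4m} dx, where A_β = (n+β)(n−4−β)/4. -/
open MeasureTheory Real RealInnerProductSpace

open Filter Metric Set Function Bornology Topology

noncomputable section

variable {n : ℕ}

lemma fderiv_eq_zero_of_nmem_tsupport {f : Euc n → ℝ} {x : Euc n} (hx : x ∉ tsupport f) :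
    fderiv ℝ f x = 0 := by
  by_contra h
  exact hx (support_fderiv_subset (𝕜 := ℝ) (Function.mem_support.2 h))

lemma integral_fderiv_apply_eq_zero {F : Euc n → ℝ} (hF : ContDiff ℝ 1 F)
    (hFc : HasCompactSupport F) (w : Euc n) :
    ∫ x : Euc n, fderiv ℝ F x w = 0 := by
  obtain ⟨C, hC⟩ := ContDiff.lipschitzWith_of_hasCompactSupport hFc hF one_ne_zero
  obtain ⟨R, hR0, hRs⟩ := hFc.isBounded.subset_ball_lt 0 0
  set b : ContDiffBump (0 : Euc n) := ⟨R, R + 1, hR0, by linarith⟩ with hbdef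
  have hbR : b.rIn = R := rfl
  have hb1 : ∀ x ∈ tsupport F, b x = 1 := fun x hx =>
    b.one_of_mem_closedBall (ball_subset_closedBall (hbR ▸ hRs hx))
  obtain ⟨D, hD⟩ := ContDiff.lipschitzWith_of_hasCompactSupport b.hasCompactSupport
    (b.contDiff (n := 1)) one_ne_zero
  have hFd : Differentiable ℝ F := hF.differentiable one_ne_zero
  have h1 : (fun x => fderiv ℝ F x w) = fun x => lineDeriv ℝ F x w * b x := by
    funext x
    rw [(hFd x).lineDeriv_eq_fderiv]
    by_cases hx : x ∈ tsupport F
    · rw [hb1 x hx, mul_one]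
    · rw [fderiv_eq_zero_of_nmem_tsupport hx]; simp
  have h2 : (fun x => lineDeriv ℝ (⇑b) x (-w) * F x) = fun _ => (0:ℝ) := by
    funext x
    by_cases hx : x ∈ tsupport F
    · have hx' : x ∈ ball (0 : Euc n) R := hRs hx
      have hev : ⇑b =ᶠ[𝓝 x] fun _ => (1:ℝ) :=
        eventually_of_mem (isOpen_ball.mem_nhds hx')
          (fun y hy => b.one_of_mem_closedBall (ball_subset_closedBall (hbR ▸ hy)))
      have hbd : lineDeriv ℝ (⇑b) x (-w) = fderiv ℝ (⇑b) x (-w) :=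
        (((b.contDiff (n := 1)).differentiable one_ne_zero) x).lineDeriv_eq_fderiv
      rw [hbd, hev.fderiv_eq]
      simp
    · simp [image_eq_zero_of_notMem_tsupport hx]
  calc ∫ x, fderiv ℝ F x w = ∫ x, lineDeriv ℝ F x w * b x := by rw [h1]
    _ = ∫ x, lineDeriv ℝ (⇑b) x (-w) * F x :=
        hC.integral_lineDeriv_mul_eq hD b.hasCompactSupport w
    _ = 0 := by rw [h2]; simp

lemma fderiv_mul_apply' {f g : Euc n → ℝ} {x w : Euc n} (hf : DifferentiableAt ℝ f x)
    (hg : DifferentiableAt ℝ g x) :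
    fderiv ℝ (fun y => f y * g y) x w = fderiv ℝ f x w * g x + f x * fderiv ℝ g x w := by
  rw [fderiv_fun_mul hf hg]
  simp only [ContinuousLinearMap.add_apply, ContinuousLinearMap.smul_apply, smul_eq_mul]
  ring


lemma n2_eq (y : Euc n) : ∑ i, (y i)^2 = ‖y‖^2 := by
  have h : ‖y‖ ^ 2 = ∑ i, ‖y i‖^2 := by
    rw [EuclideanSpace.norm_eq, Real.sq_sqrt (Finset.sum_nonneg fun i _ => sq_nonneg _)]
  rw [h]
  simp [Real.norm_eq_abs, sq_abs]

lemma n2_rpow (p : ℝ) (y : Euc n) : (∑ i, (y i)^2) ^ p = ‖y‖ ^ (2*p) := by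
  rw [n2_eq, ← Real.rpow_natCast ‖y‖ 2, ← Real.rpow_mul (norm_nonneg y)]
  norm_num

lemma norm_rpow_eq (γ : ℝ) (y : Euc n) : ‖y‖ ^ (-γ) = (∑ i, (y i)^2) ^ (-γ/2) := by
  rw [n2_rpow]
  congr 1
  ring

lemma hasFDerivAt_n2 (x : Euc n) :
    HasFDerivAt (fun y : Euc n => ∑ i, (y i)^2)
      (∑ i : Fin n, (2 * x i) • (EuclideanSpace.proj i : Euc n →L[ℝ] ℝ)) x := by
  have h : ∀ i : Fin n, HasFDerivAt (fun y : Euc n => (y i)^2)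
      ((2 * x i) • (EuclideanSpace.proj i : Euc n →L[ℝ] ℝ)) x := by
    intro i
    have h1 : HasDerivAt (fun t : ℝ => t^2) (2 * x i) (x i) := by
      simpa using hasDerivAt_pow 2 (x i)
    have h2 : HasFDerivAt (fun y : Euc n => y i)
        (EuclideanSpace.proj i : Euc n →L[ℝ] ℝ) x :=
      (EuclideanSpace.proj (𝕜 := ℝ) i).hasFDerivAt
    exact h1.comp_hasFDerivAt x h2
  exact HasFDerivAt.fun_sum (fun i _ => h i)

lemma fderiv_rpow_norm_apply (γ : ℝ) {x : Euc n} (hx : x ≠ 0) (j : Fin n) :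
    fderiv ℝ (fun y : Euc n => ‖y‖ ^ (-γ)) x (EuclideanSpace.single j 1)
      = -γ * ‖x‖^(-(γ+2)) * x j := by
  have hS : (∑ i, (x i)^2) ≠ 0 := by
    rw [n2_eq]
    exact pow_ne_zero 2 (norm_ne_zero_iff.2 hx)
  have hd : HasFDerivAt (fun y : Euc n => (∑ i, (y i)^2) ^ (-γ/2))
      ((-γ / 2 * (∑ i : Fin n, x i ^ 2) ^ (-γ / 2 - 1)) •
        ∑ i : Fin n, (2 * x i) • (EuclideanSpace.proj i : Euc n →L[ℝ] ℝ)) x :=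
    by have hcomp := (Real.hasDerivAt_rpow_const (x := ∑ i, (x i)^2) (p := -γ/2)
      (Or.inl hS)).comp_hasFDerivAt x (hasFDerivAt_n2 x); exact hcomp
  have heq : (fun y : Euc n => ‖y‖ ^ (-γ)) = fun y => (∑ i, (y i)^2) ^ (-γ/2) :=
    funext (norm_rpow_eq γ)
  rw [heq, hd.fderiv]
  simp only [ContinuousLinearMap.coe_smul', Pi.smul_apply, ContinuousLinearMap.coe_sum',
    Finset.sum_apply, ContinuousLinearMap.coe_smul, smul_eq_mul]
  have hproj : ∀ i : Fin n, (EuclideanSpace.proj (𝕜 := ℝ) i) (EuclideanSpace.single j (1:ℝ))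
      = if i = j then 1 else 0 := fun i => by
    rw [show (EuclideanSpace.proj (𝕜 := ℝ) i) (EuclideanSpace.single j (1:ℝ))
        = (EuclideanSpace.single j (1:ℝ)) i from rfl, EuclideanSpace.single_apply]
  have hcollapse : ∑ i : Fin n, 2 * x i *
      (EuclideanSpace.proj (𝕜 := ℝ) i) (EuclideanSpace.single j (1:ℝ)) = 2 * x j := by
    simp [hproj, mul_ite, Finset.sum_ite_eq']
  rw [hcollapse, n2_rpow, show (2:ℝ) * (-γ/2 - 1) = -(γ+2) by ring]
  ring

end

noncomputable section WbSec

variable {n : ℕ}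

/-- cutoff weight: `(1 - bump) * ‖x‖^(-γ)` -/
def Wb (b : ContDiffBump (0 : Euc n)) (γ : ℝ) (x : Euc n) : ℝ := (1 - b x) * ‖x‖ ^ (-γ)

variable (b : ContDiffBump (0 : Euc n))

lemma b_eq_zero {x : Euc n} (hx : b.rOut < ‖x‖) : b x = 0 := by
  have : x ∉ Function.support b := by
    rw [b.support_eq]
    intro h
    exact absurd (mem_ball_zero_iff.1 h) (not_lt.2 hx.le)
  exact Function.notMem_support.1 this

lemma Wb_eq {γ : ℝ} {x : Euc n} (hx : b.rOut < ‖x‖) : Wb b γ x = ‖x‖ ^ (-γ) := by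
  rw [Wb, b_eq_zero b hx]
  ring

lemma Wb_nonneg (γ : ℝ) (x : Euc n) : 0 ≤ Wb b γ x :=
  mul_nonneg (by linarith [b.le_one (x := x)]) (Real.rpow_nonneg (norm_nonneg x) _)

lemma Wb_smooth (γ : ℝ) : ContDiff ℝ 3 (Wb b γ) := by
  rw [contDiff_iff_contDiffAt]
  intro x
  by_cases hx : x ∈ ball (0 : Euc n) b.rIn
  · exact (contDiffAt_const (c := (0:ℝ))).congr_of_eventuallyEq
      (eventually_of_mem (isOpen_ball.mem_nhds hx)
        (fun y hy => by rw [Wb, b.one_of_mem_closedBall (ball_subset_closedBall hy)]; ring))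
  · have hx0 : x ≠ 0 := by
      intro h
      apply hx
      rw [h]
      exact mem_ball_self b.rIn_pos
    exact ((contDiff_const.sub (b.contDiff (n := 3))).contDiffAt).mul
      ((Real.contDiffAt_rpow_const_of_ne (p := -γ) (norm_ne_zero_iff.2 hx0)).comp x
        (contDiffAt_norm ℝ hx0))

lemma Wb_mul {a c : ℝ} {x : Euc n} (hx : b.rOut < ‖x‖) :
    Wb b a x * Wb b c x = Wb b (a + c) x := by
  have hxpos : (0:ℝ) < ‖x‖ := lt_trans b.rOut_pos hx
  rw [Wb_eq b hx, Wb_eq b hx, Wb_eq b hx, ← Real.rpow_add hxpos]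
  congr 1
  ring

lemma Wb_normsq (γ : ℝ) {x : Euc n} (hx : b.rOut < ‖x‖) :
    (∑ j, (x j)^2) * Wb b (γ + 2) x = Wb b γ x := by
  have hxpos : (0:ℝ) < ‖x‖ := lt_trans b.rOut_pos hx
  rw [n2_eq, Wb_eq b hx, Wb_eq b hx, ← Real.rpow_natCast ‖x‖ 2, ← Real.rpow_add hxpos]
  congr 1
  push_cast
  ring

lemma Wb_fderiv_apply (γ : ℝ) {x : Euc n} (hx : b.rOut < ‖x‖) (j : Fin n) :
    fderiv ℝ (Wb b γ) x (EuclideanSpace.single j 1) = -γ * Wb b (γ + 2) x * x j := by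
  have hxpos : (0:ℝ) < ‖x‖ := lt_trans b.rOut_pos hx
  have hx0 : x ≠ 0 := norm_pos_iff.1 hxpos
  have hev : Wb b γ =ᶠ[𝓝 x] fun y => ‖y‖ ^ (-γ) :=
    eventually_of_mem ((isOpen_lt continuous_const continuous_norm).mem_nhds hx)
      (fun y hy => Wb_eq b hy)
  rw [hev.fderiv_eq, fderiv_rpow_norm_apply γ hx0 j, Wb_eq b hx]

lemma Wb_pd_contDiff (γ : ℝ) (j : Fin n) :
    ContDiff ℝ 2 (fun y => fderiv ℝ (Wb b γ) y (EuclideanSpace.single j 1)) :=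
  ((Wb_smooth b γ).fderiv_right (by norm_num)).clm_apply contDiff_const

lemma Wb_lap (γ : ℝ) {x : Euc n} (hx : b.rOut < ‖x‖) :
    ∑ j : Fin n, fderiv ℝ (fun y => fderiv ℝ (Wb b γ) y (EuclideanSpace.single j 1)) x
        (EuclideanSpace.single j 1)
      = γ * (γ + 2 - (n:ℝ)) * Wb b (γ + 2) x := by
  have hopen : IsOpen {y : Euc n | b.rOut < ‖y‖} := isOpen_lt continuous_const continuous_norm
  have step : ∀ j : Fin n,
      fderiv ℝ (fun y => fderiv ℝ (Wb b γ) y (EuclideanSpace.single j 1)) x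
          (EuclideanSpace.single j 1)
        = -γ * (fderiv ℝ (Wb b (γ+2)) x (EuclideanSpace.single j 1) * x j + Wb b (γ+2) x) := by
    intro j
    have hev : (fun y => fderiv ℝ (Wb b γ) y (EuclideanSpace.single j 1))
        =ᶠ[𝓝 x] fun y => -γ * (Wb b (γ+2) y * y j) :=
      eventually_of_mem (hopen.mem_nhds hx)
        (fun y hy => by
          show fderiv ℝ (Wb b γ) y (EuclideanSpace.single j 1) = -γ * (Wb b (γ+2) y * y j)
          rw [Wb_fderiv_apply b γ hy j]
          ring)
    rw [hev.fderiv_eq]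
    have hW : DifferentiableAt ℝ (Wb b (γ+2)) x :=
      (Wb_smooth b (γ+2)).differentiable (by norm_num) x
    have hproj : DifferentiableAt ℝ (fun y : Euc n => y j) x :=
      (EuclideanSpace.proj (𝕜 := ℝ) j).differentiableAt
    rw [fderiv_const_mul ((hW.fun_mul hproj)) (-γ)]
    simp only [ContinuousLinearMap.smul_apply, smul_eq_mul]
    rw [fderiv_mul_apply' hW hproj]
    have hpd : fderiv ℝ (fun y : Euc n => y j) x = EuclideanSpace.proj (𝕜 := ℝ) j :=
      (EuclideanSpace.proj (𝕜 := ℝ) j).fderiv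
    have hpj : fderiv ℝ (fun y : Euc n => y j) x (EuclideanSpace.single j 1) = 1 := by
      rw [hpd]
      rw [show (EuclideanSpace.proj (𝕜 := ℝ) j) (EuclideanSpace.single j (1:ℝ))
          = (EuclideanSpace.single j (1:ℝ)) j from rfl, EuclideanSpace.single_apply]
      simp
    rw [hpj]
    ring
  calc ∑ j : Fin n, fderiv ℝ (fun y => fderiv ℝ (Wb b γ) y (EuclideanSpace.single j 1)) x
        (EuclideanSpace.single j 1)
      = ∑ j : Fin n, -γ * (-(γ+2) * Wb b (γ+4) x * x j * x j + Wb b (γ+2) x) := by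
        refine Finset.sum_congr rfl (fun j _ => ?_)
        rw [step j, Wb_fderiv_apply b (γ+2) hx j]
        ring_nf
    _ = -γ * (-(γ+2) * (Wb b (γ+4) x * (∑ j, (x j)^2)) + (n:ℝ) * Wb b (γ+2) x) := by
        have hterm : ∀ j : Fin n,
            -γ * (-(γ+2) * Wb b (γ+4) x * x j * x j + Wb b (γ+2) x)
              = (γ * (γ+2) * Wb b (γ+4) x) * (x j)^2 + (-γ * Wb b (γ+2) x) := fun j => by ring
        simp only [hterm]
        rw [Finset.sum_add_distrib, ← Finset.mul_sum, Finset.sum_const, Finset.card_univ,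
          Fintype.card_fin, nsmul_eq_mul]
        ring
    _ = γ * (γ + 2 - (n:ℝ)) * Wb b (γ + 2) x := by
        have h4 : (γ + 2) + 2 = γ + 4 := by ring
        have := Wb_normsq b (γ+2) hx
        rw [h4] at this
        rw [mul_comm (Wb b (γ+4) x) _, this]
        ring

end WbSec

noncomputable section RellichStep

abbrev sing (n : ℕ) (j : Fin n) : Euc n := EuclideanSpace.single j 1

variable {n : ℕ}

lemma lap_eq (f : Euc n → ℝ) (x : Euc n) :
    lap n f x = ∑ j : Fin n, fderiv ℝ (fun y => fderiv ℝ f y (sing n j)) x (sing n j) := rfl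

lemma fderiv_coord_apply (x : Euc n) (i j : Fin n) :
    fderiv ℝ (fun y : Euc n => y j) x (sing n i) = if i = j then 1 else 0 := by
  have hpd : fderiv ℝ (fun y : Euc n => y j) x = EuclideanSpace.proj (𝕜 := ℝ) j :=
    (EuclideanSpace.proj (𝕜 := ℝ) j).fderiv
  rw [hpd, show (EuclideanSpace.proj (𝕜 := ℝ) j) (EuclideanSpace.single i (1:ℝ))
      = (EuclideanSpace.single i (1:ℝ)) j from rfl, EuclideanSpace.single_apply]
  by_cases h : i = j
  · subst h; simp
  · rw [if_neg (fun hji => h hji.symm), if_neg h]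

lemma fderiv_off_zero {K : Set (Euc n)} (hK : IsClosed K) {f : Euc n → ℝ}
    (h0 : ∀ y ∉ K, f y = 0) {x : Euc n} (hx : x ∉ K) (w : Euc n) :
    fderiv ℝ f x w = 0 := by
  have hts : tsupport f ⊆ K :=
    closure_minimal (fun y hy => by_contra (fun hyK => hy (h0 y hyK))) hK
  rw [fderiv_eq_zero_of_nmem_tsupport (fun h => hx (hts h))]
  rfl

theorem rellich_step (n : ℕ) (β : ℝ) (hβ1 : -(n:ℝ) < β) (hβ2 : β < (n:ℝ) - 4)
    (v : Euc n → ℝ) (hv : ContDiff ℝ 2 v) (hcv : HasCompactSupport v)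
    (h0v : (0 : Euc n) ∉ tsupport v) :
    wnorm2 n β (lap n v) ≥ (((n:ℝ) + β) * ((n:ℝ) - 4 - β) / 4) ^ 2 * wnorm2 n (β + 4) v := by
  classical
  set A : ℝ := ((n:ℝ) + β) * ((n:ℝ) - 4 - β) / 4 with hA
  by_cases hKe : tsupport v = ∅
  · have hv0 : ∀ x, v x = 0 := fun x =>
      image_eq_zero_of_notMem_tsupport (by rw [hKe]; exact Set.notMem_empty x)
    have hveq : v = fun _ => (0:ℝ) := funext hv0
    have hlap0 : lap n v = fun _ => (0:ℝ) := by
      funext x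
      rw [lap_eq, hveq]
      have : ∀ j : Fin n, (fun y : Euc n => fderiv ℝ (fun _ : Euc n => (0:ℝ)) y (sing n j))
          = fun _ : Euc n => (0:ℝ) := by
        intro j; funext y; rw [fderiv_fun_const]; rfl
      simp [this]
    unfold wnorm2
    rw [hlap0, hveq]
    simp
  have hKne : (tsupport v).Nonempty := Set.nonempty_iff_ne_empty.2 hKe
  set K := tsupport v with hK
  have hKc : IsCompact K := hcv
  have hKcl : IsClosed K := isClosed_tsupport v
  set d : ℝ := Metric.infDist 0 K with hd
  have hd0 : 0 < d := by
    rw [hd]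
    exact (hKcl.notMem_iff_infDist_pos hKne).1 h0v
  set b : ContDiffBump (0 : Euc n) := ⟨d/3, d/2, by linarith, by linarith⟩ with hb
  have hbrOut : b.rOut = d/2 := rfl
  have hKV : ∀ x ∈ K, b.rOut < ‖x‖ := by
    intro x hx
    have h1 : d ≤ dist 0 x := Metric.infDist_le_dist_of_mem hx
    rw [dist_comm, dist_zero_right] at h1
    rw [hbrOut]
    linarith
  have hoffV : ∀ x : Euc n, ¬ b.rOut < ‖x‖ → x ∉ K := fun x hx hxK => hx (hKV x hxK)
  -- vanishing facts
  have hv_zero : ∀ x ∉ K, v x = 0 := fun x hx => image_eq_zero_of_notMem_tsupport hx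
  have hpdv_zero : ∀ x ∉ K, ∀ w : Euc n, fderiv ℝ v x w = 0 := fun x hx w =>
    fderiv_off_zero hKcl hv_zero hx w
  have hppdv_zero : ∀ (j : Fin n), ∀ x ∉ K,
      fderiv ℝ (fun y => fderiv ℝ v y (sing n j)) x (sing n j) = 0 := fun j x hx =>
    fderiv_off_zero hKcl (fun y hy => hpdv_zero y hy (sing n j)) hx (sing n j)
  have hlap_zero : ∀ x ∉ K, lap n v x = 0 := fun x hx => by
    rw [lap_eq]
    exact Finset.sum_eq_zero fun j _ => hppdv_zero j x hx
  -- regularity inventory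
  have hv1 : ContDiff ℝ 1 v := hv.of_le (by norm_num)
  have hvd : Differentiable ℝ v := hv1.differentiable one_ne_zero
  have hvC : Continuous v := hv1.continuous
  have hpdv_cd : ∀ j : Fin n, ContDiff ℝ 1 (fun y => fderiv ℝ v y (sing n j)) := fun j =>
    (hv.fderiv_right (by norm_num)).clm_apply contDiff_const
  have hpdv_d : ∀ j : Fin n, Differentiable ℝ (fun y => fderiv ℝ v y (sing n j)) := fun j =>
    (hpdv_cd j).differentiable one_ne_zero
  have hpdv_C : ∀ j : Fin n, Continuous (fun y => fderiv ℝ v y (sing n j)) := fun j =>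
    (hpdv_cd j).continuous
  have hq_C : ∀ j : Fin n,
      Continuous (fun x => fderiv ℝ (fun y => fderiv ℝ v y (sing n j)) x (sing n j)) := fun j =>
    (((hpdv_cd j).fderiv_right (m := 0) (by norm_num)).clm_apply contDiff_const).continuous
  have hlapC : Continuous (lap n v) := by
    have : lap n v = fun x => ∑ j : Fin n,
        fderiv ℝ (fun y => fderiv ℝ v y (sing n j)) x (sing n j) := rfl
    rw [this]
    exact continuous_finset_sum _ (fun j _ => hq_C j)
  have hW1 : ∀ γ : ℝ, ContDiff ℝ 1 (Wb b γ) := fun γ => (Wb_smooth b γ).of_le (by norm_num)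
  have hWd : ∀ γ : ℝ, Differentiable ℝ (Wb b γ) := fun γ => (hW1 γ).differentiable one_ne_zero
  have hWC : ∀ γ : ℝ, Continuous (Wb b γ) := fun γ => (hW1 γ).continuous
  have hpW_cd : ∀ (γ : ℝ) (j : Fin n),
      ContDiff ℝ 1 (fun y => fderiv ℝ (Wb b γ) y (sing n j)) := fun γ j =>
    (Wb_pd_contDiff b γ j).of_le (by norm_num)
  have hpW_C : ∀ (γ : ℝ) (j : Fin n),
      Continuous (fun y => fderiv ℝ (Wb b γ) y (sing n j)) := fun γ j => (hpW_cd γ j).continuous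
  have hproj_cd : ∀ j : Fin n, ContDiff ℝ 1 (fun y : Euc n => y j) := fun j =>
    (EuclideanSpace.proj (𝕜 := ℝ) j).contDiff
  have hproj_d : ∀ j : Fin n, Differentiable ℝ (fun y : Euc n => y j) := fun j =>
    (hproj_cd j).differentiable one_ne_zero
  have hproj_C : ∀ j : Fin n, Continuous (fun y : Euc n => y j) := fun j => (hproj_cd j).continuous
  -- integrability helper
  have key : ∀ f : Euc n → ℝ, Continuous f → (∀ x ∉ K, f x = 0) → Integrable f :=
    fun f hf h0 => hf.integrable_of_hasCompactSupport (HasCompactSupport.intro hKc h0)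
  -- IBP helper
  have ibp : ∀ (F : Euc n → ℝ), ContDiff ℝ 1 F → (∀ x ∉ K, F x = 0) → ∀ j : Fin n,
      (∫ x : Euc n, fderiv ℝ F x (sing n j)) = 0 := fun F hF h0 j =>
    integral_fderiv_apply_eq_zero hF (HasCompactSupport.intro hKc h0) (sing n j)

  -- component integrals
  set J : ℝ := ∫ x : Euc n, (v x)^2 * Wb b (β+4) x with hJdef
  set G : ℝ := ∫ x : Euc n, (∑ j : Fin n, (fderiv ℝ v x (sing n j))^2) * Wb b (β+2) x with hGdef
  set D : ℝ := ∫ x : Euc n, (∑ j : Fin n, v x * fderiv ℝ v x (sing n j) * x j) * Wb b (β+4) x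
    with hDdef
  set Eq : ℝ := ∫ x : Euc n,
    ∑ j : Fin n, (v x * fderiv ℝ v x (sing n j)) * fderiv ℝ (Wb b (β+2)) x (sing n j) with hEdef
  set Iq : ℝ := ∫ x : Euc n, (lap n v x * v x) * Wb b (β+2) x with hIqdef
  set L : ℝ := ∫ x : Euc n, (lap n v x)^2 * Wb b β x with hLdef
  have hJ0 : 0 ≤ J := by
    rw [hJdef]
    exact integral_nonneg fun x => mul_nonneg (sq_nonneg _) (Wb_nonneg b _ x)
  -- integrability
  have intJ : Integrable (fun x : Euc n => (v x)^2 * Wb b (β+4) x) :=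
    key _ ((hvC.pow 2).mul (hWC _)) (fun x hx => by rw [hv_zero x hx]; ring)
  have intG1 : Integrable
      (fun x : Euc n => (∑ j : Fin n, (fderiv ℝ v x (sing n j))^2) * Wb b (β+2) x) :=
    key _ ((continuous_finset_sum _ fun j _ => (hpdv_C j).pow 2).mul (hWC _))
      (fun x hx => by
        rw [Finset.sum_eq_zero (fun j _ => by rw [hpdv_zero x hx (sing n j)]; ring)]
        ring)
  have intD1 : Integrable
      (fun x : Euc n => (∑ j : Fin n, v x * fderiv ℝ v x (sing n j) * x j) * Wb b (β+4) x) :=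
    key _ ((continuous_finset_sum _ fun j _ => (hvC.mul (hpdv_C j)).mul (hproj_C j)).mul (hWC _))
      (fun x hx => by
        rw [Finset.sum_eq_zero (fun j _ => by rw [hv_zero x hx]; ring)]
        ring)
  have intE1 : Integrable (fun x : Euc n =>
      ∑ j : Fin n, (v x * fderiv ℝ v x (sing n j)) * fderiv ℝ (Wb b (β+2)) x (sing n j)) :=
    key _ (continuous_finset_sum _ fun j _ => (hvC.mul (hpdv_C j)).mul (hpW_C _ j))
      (fun x hx => Finset.sum_eq_zero fun j _ => by rw [hv_zero x hx]; ring)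
  have intIq1 : Integrable (fun x : Euc n => (lap n v x * v x) * Wb b (β+2) x) :=
    key _ ((hlapC.mul hvC).mul (hWC _)) (fun x hx => by rw [hv_zero x hx]; ring)
  have intL1 : Integrable (fun x : Euc n => (lap n v x)^2 * Wb b β x) :=
    key _ ((hlapC.pow 2).mul (hWC _)) (fun x hx => by rw [hlap_zero x hx]; ring)
  -- ===== identity A : D = ((β+4-n)/2) J =====
  set Fa : Fin n → Euc n → ℝ := fun j y => (v y * v y) * (y j * Wb b (β+4) y) with hFa
  have hFa_cd : ∀ j, ContDiff ℝ 1 (Fa j) := fun j =>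
    (hv1.mul hv1).mul ((hproj_cd j).mul (hW1 _))
  have hFa_zero : ∀ j, ∀ x ∉ K, Fa j x = 0 := fun j x hx => by
    rw [hFa]
    simp only
    rw [hv_zero x hx]
    ring
  have ptA : ∀ x : Euc n, (∑ j : Fin n, fderiv ℝ (Fa j) x (sing n j))
      = 2 * ((∑ j : Fin n, v x * fderiv ℝ v x (sing n j) * x j) * Wb b (β+4) x)
        + ((n:ℝ) - (β+4)) * ((v x)^2 * Wb b (β+4) x) := by
    intro x
    by_cases hx : b.rOut < ‖x‖
    · have wn4 : (∑ j, (x j)^2) * Wb b (β+6) x = Wb b (β+4) x := by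
        have h := Wb_normsq b (β+4) hx
        rw [show (β+4)+2 = β+6 by ring] at h
        exact h
      calc (∑ j : Fin n, fderiv ℝ (Fa j) x (sing n j))
          = ∑ j : Fin n, ((2 * Wb b (β+4) x) * (v x * fderiv ℝ v x (sing n j) * x j)
              + ((v x)^2 * Wb b (β+4) x + (-(β+4) * (v x)^2 * Wb b (β+6) x) * (x j)^2)) := by
            refine Finset.sum_congr rfl fun j _ => ?_
            conv_lhs => rw [hFa]
            beta_reduce
            rw [fderiv_mul_apply' ((hvd x).fun_mul (hvd x)) ((hproj_d j x).fun_mul (hWd _ x)),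
              fderiv_mul_apply' (hvd x) (hvd x), fderiv_mul_apply' (hproj_d j x) (hWd _ x),
              fderiv_coord_apply, Wb_fderiv_apply b (β+4) hx j,
              show (β+4)+2 = β+6 by ring]
            simp only [if_pos]
            ring
        _ = (2 * Wb b (β+4) x) * (∑ j : Fin n, v x * fderiv ℝ v x (sing n j) * x j)
              + ((n:ℝ) * ((v x)^2 * Wb b (β+4) x)
                + (-(β+4) * (v x)^2 * Wb b (β+6) x) * (∑ j, (x j)^2)) := by
            rw [Finset.sum_add_distrib, ← Finset.mul_sum, Finset.sum_add_distrib,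
              Finset.sum_const, ← Finset.mul_sum, Finset.card_univ, Fintype.card_fin,
              nsmul_eq_mul]
        _ = _ := by linear_combination (-(β+4) * (v x)^2) * wn4
    · have hxK : x ∉ K := hoffV x hx
      rw [Finset.sum_eq_zero (fun j _ => fderiv_off_zero hKcl (hFa_zero j) hxK (sing n j)),
        Finset.sum_eq_zero (fun (j : Fin n) _ => by rw [hv_zero x hxK]; ring :
          ∀ j ∈ Finset.univ, v x * fderiv ℝ v x (sing n j) * x j = 0), hv_zero x hxK]
      ring
  have intFa : ∀ j : Fin n, Integrable (fun x : Euc n => fderiv ℝ (Fa j) x (sing n j)) := fun j =>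
    key _ ((((hFa_cd j).fderiv_right (m := 0) (by norm_num)).clm_apply contDiff_const).continuous)
      (fun x hx => fderiv_off_zero hKcl (hFa_zero j) hx (sing n j))
  have hDeq : D = (((β+4) - (n:ℝ))/2) * J := by
    have h0' : (∫ x : Euc n, ∑ j : Fin n, fderiv ℝ (Fa j) x (sing n j)) = 0 := by
      rw [integral_finset_sum _ (fun j _ => intFa j)]
      exact Finset.sum_eq_zero fun j _ => ibp (Fa j) (hFa_cd j) (hFa_zero j) j
    simp only [ptA] at h0'
    rw [integral_add (intD1.const_mul 2) (intJ.const_mul ((n:ℝ) - (β+4))),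
      integral_const_mul, integral_const_mul, ← hDdef, ← hJdef] at h0'
    linarith
  -- ===== identity C : Eq = -((β+2)((β+4)-n)/2) J =====
  set Fc : Fin n → Euc n → ℝ :=
    fun j y => (v y * v y) * fderiv ℝ (Wb b (β+2)) y (sing n j) with hFc
  have hFc_cd : ∀ j, ContDiff ℝ 1 (Fc j) := fun j => (hv1.mul hv1).mul (hpW_cd _ j)
  have hFc_zero : ∀ j, ∀ x ∉ K, Fc j x = 0 := fun j x hx => by
    rw [hFc]
    simp only
    rw [hv_zero x hx]
    ring
  have hpWd : ∀ (γ : ℝ) (j : Fin n),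
      Differentiable ℝ (fun y => fderiv ℝ (Wb b γ) y (sing n j)) := fun γ j =>
    (hpW_cd γ j).differentiable one_ne_zero
  have ptC : ∀ x : Euc n, (∑ j : Fin n, fderiv ℝ (Fc j) x (sing n j))
      = 2 * (∑ j : Fin n, (v x * fderiv ℝ v x (sing n j)) * fderiv ℝ (Wb b (β+2)) x (sing n j))
        + ((β+2) * ((β+4) - (n:ℝ))) * ((v x)^2 * Wb b (β+4) x) := by
    intro x
    by_cases hx : b.rOut < ‖x‖
    · have hlapW := Wb_lap b (β+2) hx
      rw [show (β+2)+2 = β+4 by ring] at hlapW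
      calc (∑ j : Fin n, fderiv ℝ (Fc j) x (sing n j))
          = ∑ j : Fin n, (2 * ((v x * fderiv ℝ v x (sing n j))
                * fderiv ℝ (Wb b (β+2)) x (sing n j))
              + (v x * v x) * fderiv ℝ (fun y => fderiv ℝ (Wb b (β+2)) y (sing n j)) x
                  (sing n j)) := by
            refine Finset.sum_congr rfl fun j _ => ?_
            conv_lhs => rw [hFc]
            beta_reduce
            rw [fderiv_mul_apply' ((hvd x).fun_mul (hvd x)) (hpWd _ j x),
              fderiv_mul_apply' (hvd x) (hvd x)]
            ring
        _ = 2 * (∑ j : Fin n, (v x * fderiv ℝ v x (sing n j))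
                * fderiv ℝ (Wb b (β+2)) x (sing n j))
              + (v x * v x) * (∑ j : Fin n,
                  fderiv ℝ (fun y => fderiv ℝ (Wb b (β+2)) y (sing n j)) x (sing n j)) := by
            rw [Finset.sum_add_distrib, ← Finset.mul_sum, ← Finset.mul_sum]
        _ = _ := by
            rw [hlapW]
            ring
    · have hxK : x ∉ K := hoffV x hx
      rw [Finset.sum_eq_zero (fun j _ => fderiv_off_zero hKcl (hFc_zero j) hxK (sing n j)),
        Finset.sum_eq_zero (fun (j : Fin n) _ => by rw [hv_zero x hxK]; ring :
          ∀ j ∈ Finset.univ, (v x * fderiv ℝ v x (sing n j))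
            * fderiv ℝ (Wb b (β+2)) x (sing n j) = 0), hv_zero x hxK]
      ring
  have intFc : ∀ j : Fin n, Integrable (fun x : Euc n => fderiv ℝ (Fc j) x (sing n j)) := fun j =>
    key _ ((((hFc_cd j).fderiv_right (m := 0) (by norm_num)).clm_apply contDiff_const).continuous)
      (fun x hx => fderiv_off_zero hKcl (hFc_zero j) hx (sing n j))
  have hEeq : Eq = -((β+2) * ((β+4) - (n:ℝ))/2) * J := by
    have h0' : (∫ x : Euc n, ∑ j : Fin n, fderiv ℝ (Fc j) x (sing n j)) = 0 := by
      rw [integral_finset_sum _ (fun j _ => intFc j)]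
      exact Finset.sum_eq_zero fun j _ => ibp (Fc j) (hFc_cd j) (hFc_zero j) j
    simp only [ptC] at h0'
    rw [integral_add (intE1.const_mul 2) (intJ.const_mul ((β+2) * ((β+4) - (n:ℝ)))),
      integral_const_mul, integral_const_mul, ← hEdef, ← hJdef] at h0'
    linarith
  -- ===== identity B : 0 = Iq + G + Eq =====
  set Fb : Fin n → Euc n → ℝ :=
    fun j y => fderiv ℝ v y (sing n j) * (v y * Wb b (β+2) y) with hFb
  have hFb_cd : ∀ j, ContDiff ℝ 1 (Fb j) := fun j => (hpdv_cd j).mul (hv1.mul (hW1 _))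
  have hFb_zero : ∀ j, ∀ x ∉ K, Fb j x = 0 := fun j x hx => by
    rw [hFb]
    simp only
    rw [hv_zero x hx]
    ring
  have ptB : ∀ x : Euc n, (∑ j : Fin n, fderiv ℝ (Fb j) x (sing n j))
      = (lap n v x * v x) * Wb b (β+2) x
        + ((∑ j : Fin n, (fderiv ℝ v x (sing n j))^2) * Wb b (β+2) x
          + (∑ j : Fin n, (v x * fderiv ℝ v x (sing n j))
              * fderiv ℝ (Wb b (β+2)) x (sing n j))) := by
    intro x
    calc (∑ j : Fin n, fderiv ℝ (Fb j) x (sing n j))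
        = ∑ j : Fin n,
            ((fderiv ℝ (fun y => fderiv ℝ v y (sing n j)) x (sing n j) * (v x * Wb b (β+2) x))
            + ((fderiv ℝ v x (sing n j))^2 * Wb b (β+2) x
              + (v x * fderiv ℝ v x (sing n j)) * fderiv ℝ (Wb b (β+2)) x (sing n j))) := by
          refine Finset.sum_congr rfl fun j _ => ?_
          conv_lhs => rw [hFb]
          beta_reduce
          rw [fderiv_mul_apply' (hpdv_d j x) ((hvd x).fun_mul (hWd _ x)),
            fderiv_mul_apply' (hvd x) (hWd _ x)]
          ring
      _ = (∑ j : Fin n, fderiv ℝ (fun y => fderiv ℝ v y (sing n j)) x (sing n j))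
            * (v x * Wb b (β+2) x)
          + ((∑ j : Fin n, (fderiv ℝ v x (sing n j))^2) * Wb b (β+2) x
            + (∑ j : Fin n, (v x * fderiv ℝ v x (sing n j))
                * fderiv ℝ (Wb b (β+2)) x (sing n j))) := by
          rw [Finset.sum_add_distrib, Finset.sum_add_distrib, ← Finset.sum_mul, ← Finset.sum_mul]
      _ = _ := by
          rw [← lap_eq]
          ring
  have intFb : ∀ j : Fin n, Integrable (fun x : Euc n => fderiv ℝ (Fb j) x (sing n j)) := fun j =>
    key _ ((((hFb_cd j).fderiv_right (m := 0) (by norm_num)).clm_apply contDiff_const).continuous)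
      (fun x hx => fderiv_off_zero hKcl (hFb_zero j) hx (sing n j))
  have hBeq : 0 = Iq + (G + Eq) := by
    have h0' : (∫ x : Euc n, ∑ j : Fin n, fderiv ℝ (Fb j) x (sing n j)) = 0 := by
      rw [integral_finset_sum _ (fun j _ => intFb j)]
      exact Finset.sum_eq_zero fun j _ => ibp (Fb j) (hFb_cd j) (hFb_zero j) j
    simp only [ptB] at h0'
    have intGE : Integrable (fun x : Euc n =>
        (∑ j : Fin n, (fderiv ℝ v x (sing n j))^2) * Wb b (β+2) x
          + ∑ j : Fin n, (v x * fderiv ℝ v x (sing n j))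
              * fderiv ℝ (Wb b (β+2)) x (sing n j)) := intG1.add intE1
    rw [integral_add intIq1 intGE, integral_add intG1 intE1,
      ← hIqdef, ← hGdef, ← hEdef] at h0'
    linarith

  -- ===== Hardy inequality =====
  set lam : ℝ := ((n:ℝ) - β - 4)/2 with hlam
  have hGge : lam^2 * J ≤ G := by
    have hpos : 0 ≤ ∫ x : Euc n,
        (∑ j : Fin n, (fderiv ℝ v x (sing n j) + lam * (v x * x j * Wb b 2 x))^2)
          * Wb b (β+2) x :=
      integral_nonneg fun x => mul_nonneg (Finset.sum_nonneg fun j _ => sq_nonneg _)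
        (Wb_nonneg b _ x)
    have ptH : ∀ x : Euc n,
        (∑ j : Fin n, (fderiv ℝ v x (sing n j) + lam * (v x * x j * Wb b 2 x))^2) * Wb b (β+2) x
        = (∑ j : Fin n, (fderiv ℝ v x (sing n j))^2) * Wb b (β+2) x
          + ((2*lam) * ((∑ j : Fin n, v x * fderiv ℝ v x (sing n j) * x j) * Wb b (β+4) x)
            + lam^2 * ((v x)^2 * Wb b (β+4) x)) := by
      intro x
      by_cases hx : b.rOut < ‖x‖
      · have w22 : Wb b 2 x * Wb b (β+2) x = Wb b (β+4) x := by
          rw [Wb_mul b hx, show (2:ℝ)+(β+2) = β+4 by ring]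
        have w24 : Wb b 2 x * Wb b (β+4) x = Wb b (β+6) x := by
          rw [Wb_mul b hx, show (2:ℝ)+(β+4) = β+6 by ring]
        have wn4 : (∑ j, (x j)^2) * Wb b (β+6) x = Wb b (β+4) x := by
          have h := Wb_normsq b (β+4) hx
          rw [show (β+4)+2 = β+6 by ring] at h
          exact h
        calc (∑ j : Fin n, (fderiv ℝ v x (sing n j) + lam * (v x * x j * Wb b 2 x))^2)
              * Wb b (β+2) x
            = (∑ j : Fin n, ((fderiv ℝ v x (sing n j))^2
                + ((2 * lam * Wb b 2 x) * (v x * fderiv ℝ v x (sing n j) * x j)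
                  + (lam^2 * (v x)^2 * Wb b 2 x * Wb b 2 x) * (x j)^2))) * Wb b (β+2) x := by
              rw [Finset.sum_congr rfl (fun j _ => by ring :
                ∀ j ∈ Finset.univ, (fderiv ℝ v x (sing n j) + lam * (v x * x j * Wb b 2 x))^2
                  = (fderiv ℝ v x (sing n j))^2
                    + ((2 * lam * Wb b 2 x) * (v x * fderiv ℝ v x (sing n j) * x j)
                      + (lam^2 * (v x)^2 * Wb b 2 x * Wb b 2 x) * (x j)^2))]
          _ = ((∑ j : Fin n, (fderiv ℝ v x (sing n j))^2)
                + ((2 * lam * Wb b 2 x) * (∑ j : Fin n, v x * fderiv ℝ v x (sing n j) * x j)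
                  + (lam^2 * (v x)^2 * Wb b 2 x * Wb b 2 x) * (∑ j, (x j)^2)))
                * Wb b (β+2) x := by
              rw [Finset.sum_add_distrib, Finset.sum_add_distrib, ← Finset.mul_sum,
                ← Finset.mul_sum]
          _ = _ := by
              linear_combination
                (2*lam*(∑ j : Fin n, v x * fderiv ℝ v x (sing n j) * x j)) * w22
                + (lam^2*(v x)^2*(∑ j, (x j)^2)*Wb b 2 x) * w22
                + (lam^2*(v x)^2*(∑ j, (x j)^2)) * w24
                + (lam^2*(v x)^2) * wn4
      · have hxK : x ∉ K := hoffV x hx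
        simp [hv_zero x hxK, hpdv_zero x hxK]
    simp only [ptH] at hpos
    have intT2 : Integrable (fun x : Euc n =>
        (2*lam) * ((∑ j : Fin n, v x * fderiv ℝ v x (sing n j) * x j) * Wb b (β+4) x)) :=
      intD1.const_mul _
    have intT3 : Integrable (fun x : Euc n => lam^2 * ((v x)^2 * Wb b (β+4) x)) :=
      intJ.const_mul _
    have intT23 : Integrable (fun x : Euc n =>
        (2*lam) * ((∑ j : Fin n, v x * fderiv ℝ v x (sing n j) * x j) * Wb b (β+4) x)
          + lam^2 * ((v x)^2 * Wb b (β+4) x)) := intT2.add intT3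
    rw [integral_add intG1 intT23, integral_add intT2 intT3,
      integral_const_mul, integral_const_mul, ← hGdef, ← hDdef, ← hJdef] at hpos
    have h2 : 2*lam*D = -2*lam^2*J := by
      rw [hDeq, hlam]
      ring
    linarith only [hpos, h2]
  -- ===== combine =====
  have hIqle : Iq ≤ -A * J := by
    have hAeq : A = lam^2 - (β+2) * ((β+4) - (n:ℝ))/2 := by
      rw [hA, hlam]
      ring
    have hIqeq : Iq = -G - Eq := by linarith [hBeq]
    rw [hIqeq, hEeq, hAeq]
    linarith only [hGge]
  have hA0 : 0 ≤ A := by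
    rw [hA]
    have h1 : 0 ≤ (n:ℝ) + β := by linarith
    have h2 : 0 ≤ (n:ℝ) - 4 - β := by linarith
    exact div_nonneg (mul_nonneg h1 h2) (by norm_num)
  have hposF : 0 ≤ L + (2*A*Iq + A^2*J) := by
    have hpos : 0 ≤ ∫ x : Euc n, (lap n v x + A * (v x * Wb b 2 x))^2 * Wb b β x :=
      integral_nonneg fun x => mul_nonneg (sq_nonneg _) (Wb_nonneg b _ x)
    have ptF : ∀ x : Euc n, (lap n v x + A * (v x * Wb b 2 x))^2 * Wb b β x
        = (lap n v x)^2 * Wb b β x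
          + ((2*A) * ((lap n v x * v x) * Wb b (β+2) x)
            + A^2 * ((v x)^2 * Wb b (β+4) x)) := by
      intro x
      by_cases hx : b.rOut < ‖x‖
      · have w2b : Wb b 2 x * Wb b β x = Wb b (β+2) x := by
          rw [Wb_mul b hx, show (2:ℝ)+β = β+2 by ring]
        have w2b2 : Wb b 2 x * Wb b (β+2) x = Wb b (β+4) x := by
          rw [Wb_mul b hx, show (2:ℝ)+(β+2) = β+4 by ring]
        linear_combination (2*A*(lap n v x * v x)) * w2b
          + (A^2*(v x)^2* Wb b 2 x) * w2b + (A^2*(v x)^2) * w2b2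
      · have hxK : x ∉ K := hoffV x hx
        rw [hv_zero x hxK, hlap_zero x hxK]
        ring
    simp only [ptF] at hpos
    have intT2 : Integrable (fun x : Euc n =>
        (2*A) * ((lap n v x * v x) * Wb b (β+2) x)) := intIq1.const_mul _
    have intT3 : Integrable (fun x : Euc n => A^2 * ((v x)^2 * Wb b (β+4) x)) :=
      intJ.const_mul _
    have intT23 : Integrable (fun x : Euc n =>
        (2*A) * ((lap n v x * v x) * Wb b (β+2) x)
          + A^2 * ((v x)^2 * Wb b (β+4) x)) := intT2.add intT3
    rw [integral_add intL1 intT23, integral_add intT2 intT3,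
      integral_const_mul, integral_const_mul, ← hLdef, ← hIqdef, ← hJdef] at hpos
    linarith only [hpos]
  have hLJ : A^2 * J ≤ L := by
    have h2 := mul_le_mul_of_nonneg_left hIqle (by linarith only [hA0] : (0:ℝ) ≤ 2*A)
    linarith only [hposF, h2]
  -- ===== convert to wnorm2 =====
  have hg1 : (fun x : Euc n => lap n v x ^ 2 * ‖x‖ ^ (-β))
      = fun x => (lap n v x)^2 * Wb b β x := by
    funext x
    by_cases hx : b.rOut < ‖x‖
    · rw [Wb_eq b hx]
    · rw [hlap_zero x (hoffV x hx)]
      ring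
  have hg2 : (fun x : Euc n => v x ^ 2 * ‖x‖ ^ (-(β+4)))
      = fun x => (v x)^2 * Wb b (β+4) x := by
    funext x
    by_cases hx : b.rOut < ‖x‖
    · rw [Wb_eq b hx]
    · rw [hv_zero x (hoffV x hx)]
      ring
  unfold wnorm2
  rw [hg1, hg2, ← hLdef, ← hJdef]
  exact hLJ


end RellichStep

noncomputable section Main

variable {n : ℕ}

lemma lap_zero_off {f : Euc n → ℝ} : ∀ x ∉ tsupport f, lap n f x = 0 := by
  intro x hx
  rw [lap_eq]
  refine Finset.sum_eq_zero fun j _ => ?_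
  exact fderiv_off_zero (isClosed_tsupport f)
    (fun y hy => fderiv_off_zero (isClosed_tsupport f)
      (fun z hz => image_eq_zero_of_notMem_tsupport hz) hy (sing n j)) hx (sing n j)

lemma tsupport_lap_subset {f : Euc n → ℝ} : tsupport (lap n f) ⊆ tsupport f :=
  closure_minimal (fun x hx => by_contra fun hxK => hx (lap_zero_off x hxK))
    (isClosed_tsupport f)

lemma hasCompactSupport_lap {f : Euc n → ℝ} (hc : HasCompactSupport f) :
    HasCompactSupport (lap n f) :=
  HasCompactSupport.intro hc lap_zero_off

lemma contDiff_lap {k : ℕ} {f : Euc n → ℝ} (hf : ContDiff ℝ (k + 2 : ℕ) f) :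
    ContDiff ℝ k (lap n f) := by
  have hrw : lap n f = fun x => ∑ j : Fin n,
      fderiv ℝ (fun y => fderiv ℝ f y (sing n j)) x (sing n j) := rfl
  rw [hrw]
  refine ContDiff.sum fun j _ => ?_
  have h1 : ContDiff ℝ (k + 1 : ℕ) (fun y => fderiv ℝ f y (sing n j)) := by
    refine ContDiff.clm_apply ?_ contDiff_const
    refine hf.fderiv_right ?_
    norm_cast
  refine ContDiff.clm_apply ?_ contDiff_const
  refine h1.fderiv_right ?_
  norm_cast

theorem polyRellich_aux : ∀ (m n : ℕ) (α : ℝ), 2 * m < n → -(n:ℝ) < α →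
    α < (n:ℝ) - 4 * m → ∀ u : Euc n → ℝ, ContDiff ℝ (2 * m) u → HasCompactSupport u →
    (0 : Euc n) ∉ tsupport u →
    wnorm2 n α ((lap n)^[m] u)
      ≥ (∏ ℓ ∈ Finset.range m,
            (((n : ℝ) + (α + 4 * ℓ)) * ((n : ℝ) - 4 - (α + 4 * ℓ)) / 4) ^ 2)
          * wnorm2 n (α + 4 * m) u := by
  intro m
  induction m with
  | zero =>
    intro n α h1 h2 h3 u hu hc h0
    simp only [Function.iterate_zero, id_eq, Finset.range_zero, Finset.prod_empty,
      Nat.cast_zero, mul_zero, add_zero, one_mul]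
    exact le_rfl
  | succ m ih =>
    intro n α hnm hα₁ hα₂ u hu hc h0
    have hmr : (0:ℝ) ≤ (m:ℝ) := Nat.cast_nonneg m
    have hα₂' : α < (n:ℝ) - 4 * m := by
      push_cast at hα₂ ⊢
      linarith
    have hnm' : 2 * m < n := by omega
    have hu2 : ContDiff ℝ 2 u := hu.of_le (by exact_mod_cast (by omega : 2 ≤ 2 * (m+1)))
    have huL : ContDiff ℝ (2 * m : ℕ) (lap n u) := by
      apply contDiff_lap
      rw [show 2*m+2 = 2*(m+1) from by ring]
      exact hu
    have hcL : HasCompactSupport (lap n u) := hasCompactSupport_lap hc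
    have h0L : (0 : Euc n) ∉ tsupport (lap n u) := fun h => h0 (tsupport_lap_subset h)
    have IH := ih n α hnm' hα₁ hα₂' (lap n u) huL hcL h0L
    have hβ1 : -(n:ℝ) < α + 4 * m := by linarith
    have hβ2 : α + 4 * m < (n:ℝ) - 4 := by
      push_cast at hα₂
      linarith
    have hstep := rellich_step n (α + 4 * m) hβ1 hβ2 u hu2 hc h0
    have hP0 : 0 ≤ ∏ ℓ ∈ Finset.range m,
        (((n : ℝ) + (α + 4 * ℓ)) * ((n : ℝ) - 4 - (α + 4 * ℓ)) / 4) ^ 2 :=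
      Finset.prod_nonneg fun _ _ => sq_nonneg _
    rw [Function.iterate_succ_apply, Finset.prod_range_succ,
      show (α + 4 * ((m+1 : ℕ):ℝ)) = (α + 4 * (m:ℝ)) + 4 from by push_cast; ring]
    calc wnorm2 n α ((lap n)^[m] (lap n u))
        ≥ (∏ ℓ ∈ Finset.range m,
              (((n : ℝ) + (α + 4 * ℓ)) * ((n : ℝ) - 4 - (α + 4 * ℓ)) / 4) ^ 2)
            * wnorm2 n (α + 4 * m) (lap n u) := IH
      _ ≥ (∏ ℓ ∈ Finset.range m,
              (((n : ℝ) + (α + 4 * ℓ)) * ((n : ℝ) - 4 - (α + 4 * ℓ)) / 4) ^ 2)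
            * ((((n:ℝ) + (α + 4 * m)) * ((n:ℝ) - 4 - (α + 4 * m)) / 4) ^ 2
              * wnorm2 n ((α + 4 * m) + 4) u) := mul_le_mul_of_nonneg_left hstep hP0
      _ = ((∏ ℓ ∈ Finset.range m,
              (((n : ℝ) + (α + 4 * ℓ)) * ((n : ℝ) - 4 - (α + 4 * ℓ)) / 4) ^ 2)
            * (((n:ℝ) + (α + 4 * ↑m)) * ((n:ℝ) - 4 - (α + 4 * ↑m)) / 4) ^ 2)
            * wnorm2 n ((α + 4 * m) + 4) u := by ring

end Main

theorem polyharmonic_hardy_rellich (n m : ℕ) (α : ℝ) (hnm : 2 * m < n)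
    (hα₁ : -(n : ℝ) < α) (hα₂ : α < (n : ℝ) - 4 * m) (u : Euc n → ℝ)
    (hu : ContDiff ℝ (2 * m) u) (hc : HasCompactSupport u)
    (h0 : (0 : Euc n) ∉ tsupport u) :
    wnorm2 n α ((lap n)^[m] u)
      ≥ (∏ ℓ ∈ Finset.range m,
            (((n : ℝ) + (α + 4 * ℓ)) * ((n : ℝ) - 4 - (α + 4 * ℓ)) / 4) ^ 2)
          * wnorm2 n (α + 4 * m) u :=
  polyRellich_aux m n α hnm hα₁ hα₂ u hu hc h0
end
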